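/- arXiv:1208.2783 — 4 statements merged into one kernel-verified Lean document; each statement's English description precedes it below -/
import Mathlib

section
/- For each p ≥ 1, the set of cellular automata c with c^p = id is closed in the uniform Bernoulli metric space. -/
open MeasureTheory Filter Function

section BasicDefs

variable {A : Type}

/-- `f` admits a local rule of radius `r`: there is `F` depending only on
coordinates in `[-r, r]` such that `f x i = F (σ^i x)`. -/
def HasRadius (r : ℕ) (f : (ℤ → A) → (ℤ → A)) : Prop :=
  ∃ F : (ℤ → A) → A,
    (∀ x y : ℤ → A, (∀ j : ℤ, |j| ≤ (r : ℤ) → x j = y j) → F x = F y) ∧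
    ∀ (x : ℤ → A) (i : ℤ), f x i = F fun j => x (i + j)

/-- A cellular automaton is a map admitting a local rule of some radius. -/
def IsCA (f : (ℤ → A) → (ℤ → A)) : Prop := ∃ r, HasRadius r f

/-- The minimal radius of a cellular automaton. -/
noncomputable def rad (f : (ℤ → A) → (ℤ → A)) : ℕ := sInf {r : ℕ | HasRadius r f}

/-- Centered words of radius `r`. -/
def Word (A : Type) (r : ℕ) := (Finset.Icc (-(r : ℤ)) (r : ℤ) : Finset ℤ) → A

/-- The difference set of `c` and `d` for radius `r`: centered words of radius `r`
on which the images of `c` and `d` differ at the central cell. -/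
def diffSet (r : ℕ) (c d : (ℤ → A) → (ℤ → A)) : Set (Word A r) :=
  {w | ∃ x : ℤ → A, (∀ j : (Finset.Icc (-(r : ℤ)) (r : ℤ) : Finset ℤ), x j.1 = w j) ∧
        c x 0 ≠ d x 0}

/-- The shift map. -/
def shift (x : ℤ → A) : ℤ → A := fun i => x (i + 1)

/-- Preimages of the centered word `v` of radius `n` under the word function of `c`
used with radius `r`: centered words `u` of radius `n + r` such that some (equivalently,
by the radius assumption, every) configuration extending `u` maps under `c` to a
configuration extending `v` in its central part. -/
def wordPreimages (c : (ℤ → A) → (ℤ → A)) (n r : ℕ) (v : Word A n) :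
    Set (Word A (n + r)) :=
  {u | ∃ x : ℤ → A,
        (∀ j : (Finset.Icc (-((n + r : ℕ) : ℤ)) ((n + r : ℕ) : ℤ) : Finset ℤ), x j.1 = u j) ∧
        ∀ j : (Finset.Icc (-(n : ℤ)) (n : ℤ) : Finset ℤ), c x j.1 = v j}

-- The Cantor metric on configurations.
open Classical in
noncomputable def dC (x y : ℤ → A) : ℝ :=
  ∑' i : ℤ, if x i ≠ y i then (2 : ℝ) ^ (-|i|) else 0

/-- The Besicovitch pseudodistance on configurations. -/
noncomputable def dB (x y : ℤ → A) : ℝ :=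
  limsup (fun n : ℕ =>
    (({i : ℤ | |i| ≤ (n : ℤ) ∧ x i ≠ y i}.ncard : ℝ)) / (2 * (n : ℝ) + 1)) atTop

end BasicDefs

section FintypeDefs

variable {A : Type} [Fintype A]

/-- The normalized size of the difference set for radius `r`. -/
noncomputable def deltaR (r : ℕ) (c d : (ℤ → A) → (ℤ → A)) : ℝ :=
  (diffSet r c d).ncard / (Fintype.card A : ℝ) ^ (2 * r + 1)

/-- The uniform Bernoulli distance between two cellular automata (computed with the
common radius `max (rad c) (rad d)`; by radius-independence this is the canonical value). -/
noncomputable def delta (c d : (ℤ → A) → (ℤ → A)) : ℝ :=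
  deltaR (max (rad c) (rad d)) c d

end FintypeDefs

section MeasureDefs

variable {A : Type} [MeasurableSpace A]

/-- The pseudometric on cellular automata induced by the measure `μ`:
the measure of the cylinder of the difference set, i.e. of the set of
configurations on which `c` and `d` differ at coordinate `0`. -/
noncomputable def deltaMu (μ : Measure (ℤ → A)) (c d : (ℤ → A) → (ℤ → A)) : ℝ :=
  (μ {x | c x 0 ≠ d x 0}).toReal

/-- `c` preserves the measure `μ`. -/
def Preserves (μ : Measure (ℤ → A)) (c : (ℤ → A) → (ℤ → A)) : Prop :=
  ∀ B : Set (ℤ → A), MeasurableSet B → μ (c ⁻¹' B) = μ B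

/-- `μ` is shift-invariant. -/
def ShiftInvariant (μ : Measure (ℤ → A)) : Prop :=
  ∀ B : Set (ℤ → A), MeasurableSet B → μ (shift ⁻¹' B) = μ B

end MeasureDefs


namespace S7

variable {A : Type}

/-! ### CA basics -/

def tr (i : ℤ) (x : ℤ → A) : ℤ → A := fun j => x (i + j)

theorem hasRadius_mono {r r' : ℕ} {f : (ℤ → A) → (ℤ → A)} (h : HasRadius r f) (hrr : r ≤ r') :
    HasRadius r' f := by
  obtain ⟨F, hloc, hrule⟩ := h
  refine ⟨F, fun x y hxy => hloc x y (fun j hj => hxy j (hj.trans (by exact_mod_cast hrr))), hrule⟩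

theorem hasRadius_id : HasRadius 0 (id : (ℤ → A) → (ℤ → A)) :=
  ⟨fun x => x 0, fun x y h => h 0 (by simp), fun x i => by simp⟩

theorem hasRadius_comp {s t : ℕ} {f g : (ℤ → A) → (ℤ → A)} (hf : HasRadius s f)
    (hg : HasRadius t g) : HasRadius (s + t) (f ∘ g) := by
  obtain ⟨F, hF, hFr⟩ := hf
  obtain ⟨G, hG, hGr⟩ := hg
  refine ⟨fun x => F (fun j => G (fun k => x (j + k))), ?_, ?_⟩
  · intro x y hxy
    refine hF _ _ (fun j hj => hG _ _ (fun k hk => hxy (j + k) ?_))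
    refine (abs_add_le j k).trans ?_
    push_cast
    exact add_le_add hj hk
  · intro x i
    simp only [Function.comp_apply]
    rw [hFr]
    congr 1; funext j
    rw [hGr]
    congr 1; funext k
    congr 1; ring

theorem hasRadius_iterate {r : ℕ} {c : (ℤ → A) → (ℤ → A)} (h : HasRadius r c) (k : ℕ) :
    HasRadius (k * r) (c^[k]) := by
  induction k with
  | zero => simpa using hasRadius_id
  | succ n ih =>
    rw [Function.iterate_succ]
    have h2 := hasRadius_comp ih h
    rwa [Nat.succ_mul]

theorem map_tr {r : ℕ} {f : (ℤ → A) → (ℤ → A)} (hf : HasRadius r f) (i : ℤ) (x : ℤ → A)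
    (j : ℤ) : f (tr i x) j = f x (i + j) := by
  obtain ⟨F, hF, hFr⟩ := hf
  rw [hFr, hFr]
  congr 1; funext k
  show x (i + (j + k)) = x (i + j + k)
  congr 1; ring

theorem map_tr_zero {r : ℕ} {f : (ℤ → A) → (ℤ → A)} (hf : HasRadius r f) (i : ℤ) (x : ℤ → A) :
    f (tr i x) 0 = f x i := by
  rw [map_tr hf, add_zero]

end S7

namespace S7

variable {A : Type}

/-! ### Counting infrastructure -/

noncomputable def II (n : ℕ) : Finset ℤ := Finset.Icc (-(n : ℤ)) (n : ℤ)

theorem card_II (n : ℕ) : (II n).card = 2 * n + 1 := by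
  rw [II, Int.card_Icc]
  omega

theorem mem_II {n : ℕ} {j : ℤ} : j ∈ II n ↔ |j| ≤ (n : ℤ) := by
  rw [II, Finset.mem_Icc, abs_le]

def restF (J : Finset ℤ) (x : ℤ → A) : J → A := fun j => x j.1

noncomputable def cnt [Fintype A] (J : Finset ℤ) (S : Set (ℤ → A)) : ℕ :=
  (restF J '' S).ncard

def Supp (J : Finset ℤ) (S : Set (ℤ → A)) : Prop :=
  ∀ x y : ℤ → A, (∀ j ∈ J, x j = y j) → x ∈ S → y ∈ S

theorem supp_mono {J J' : Finset ℤ} {S : Set (ℤ → A)} (h : Supp J S) (hJJ : J ⊆ J') :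
    Supp J' S :=
  fun x y hxy hx => h x y (fun j hj => hxy j (hJJ hj)) hx

theorem supp_inter {J K : Finset ℤ} {S T : Set (ℤ → A)} (hS : Supp J S) (hT : Supp K T) :
    Supp (J ∪ K) (S ∩ T) := by
  intro x y hxy hx
  exact ⟨hS x y (fun j hj => hxy j (Finset.mem_union_left K hj)) hx.1,
    hT x y (fun j hj => hxy j (Finset.mem_union_right J hj)) hx.2⟩

theorem supp_univ (J : Finset ℤ) : Supp J (Set.univ : Set (ℤ → A)) :=
  fun _ _ _ _ => trivial

def emZ (i : ℤ) : ℤ ↪ ℤ := ⟨fun z => i + z, fun _ _ h => add_left_cancel h⟩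

theorem supp_translate {J : Finset ℤ} {S : Set (ℤ → A)} (h : Supp J S) (i : ℤ) :
    Supp (J.map (emZ i)) (tr i ⁻¹' S) := by
  intro x y hxy hx
  refine h (tr i x) (tr i y) (fun j hj => ?_) hx
  exact hxy (i + j) (Finset.mem_map_of_mem _ hj)

section FintypeCnt

variable [Fintype A]

theorem ncard_prod' {α β : Type} (s : Set α) (t : Set β) :
    (s ×ˢ t).ncard = s.ncard * t.ncard := by
  rw [← Nat.card_coe_set_eq, ← Nat.card_coe_set_eq, ← Nat.card_coe_set_eq,
    Nat.card_congr (Equiv.Set.prod s t), Nat.card_prod]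

theorem bijOn_ncard {α β : Type} {f : α → β} {s : Set α} {t : Set β} (h : Set.BijOn f s t) :
    s.ncard = t.ncard := by
  rw [← h.image_eq]
  exact (Set.ncard_image_of_injOn h.injOn).symm

theorem cnt_mono_set {J : Finset ℤ} {S T : Set (ℤ → A)} (h : S ⊆ T) : cnt J S ≤ cnt J T :=
  Set.ncard_le_ncard (Set.image_mono h) (Set.toFinite _)

theorem cnt_union_le {J : Finset ℤ} (S T : Set (ℤ → A)) :
    cnt J (S ∪ T) ≤ cnt J S + cnt J T := by
  unfold cnt
  rw [Set.image_union]
  exact Set.ncard_union_le _ _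

theorem cnt_biUnion_le {ι : Type} [DecidableEq ι] (F : Finset ι) (S : ι → Set (ℤ → A))
    (J : Finset ℤ) : cnt J (⋃ i ∈ F, S i) ≤ ∑ i ∈ F, cnt J (S i) := by
  induction F using Finset.induction with
  | empty => simp [cnt]
  | @insert a F ha ih =>
    rw [Finset.set_biUnion_insert, Finset.sum_insert ha]
    exact (cnt_union_le _ _).trans (by omega)

theorem cnt_pos {J : Finset ℤ} {S : Set (ℤ → A)} (h : S.Nonempty) : 1 ≤ cnt J S := by
  rw [Nat.one_le_iff_ne_zero, ← Nat.pos_iff_ne_zero]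
  exact (Set.ncard_pos (Set.toFinite _)).mpr (h.image _)

theorem cnt_union_disj [Nonempty A] {J K : Finset ℤ} {S T : Set (ℤ → A)}
    (hS : Supp J S) (hT : Supp K T) (hJK : Disjoint J K) :
    cnt (J ∪ K) (S ∩ T) = cnt J S * cnt K T := by
  classical
  have hbij : Set.BijOn
      (fun w : ((J ∪ K : Finset ℤ) → A) =>
        ((fun j : J => w ⟨j.1, Finset.mem_union_left K j.2⟩,
          fun k : K => w ⟨k.1, Finset.mem_union_right J k.2⟩) : (J → A) × (K → A)))
      (restF (J ∪ K) '' (S ∩ T)) ((restF J '' S) ×ˢ (restF K '' T)) := by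
    refine ⟨?_, ?_, ?_⟩
    · rintro w ⟨x, ⟨hxS, hxT⟩, rfl⟩
      exact ⟨⟨x, hxS, rfl⟩, ⟨x, hxT, rfl⟩⟩
    · rintro w₁ - w₂ - h
      funext j
      rcases Finset.mem_union.mp j.2 with hj | hj
      · exact congrFun (congrArg Prod.fst h) ⟨j.1, hj⟩
      · exact congrFun (congrArg Prod.snd h) ⟨j.1, hj⟩
    · rintro ⟨a, b⟩ ⟨⟨x, hxS, rfl⟩, ⟨y, hyT, rfl⟩⟩
      refine ⟨restF (J ∪ K) (fun i => if i ∈ J then x i else y i), ⟨fun i => if i ∈ J then x i else y i, ⟨?_, ?_⟩, rfl⟩, ?_⟩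
      · refine hS x _ (fun j hj => ?_) hxS
        simp [hj]
      · refine hT y _ (fun j hj => ?_) hyT
        have : j ∉ J := Finset.disjoint_right.mp hJK hj
        simp [this]
      · refine Prod.ext ?_ ?_
        · funext j
          show (if j.1 ∈ J then x j.1 else y j.1) = x j.1
          simp [j.2]
        · funext k
          have : k.1 ∉ J := Finset.disjoint_right.mp hJK k.2
          show (if k.1 ∈ J then x k.1 else y k.1) = y k.1
          simp [this]
  rw [cnt, bijOn_ncard hbij, ncard_prod']
  rfl

theorem cnt_univ [Nonempty A] (J : Finset ℤ) :
    cnt J (Set.univ : Set (ℤ → A)) = Fintype.card A ^ J.card := by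
  classical
  have hsurj : Function.Surjective (restF (A := A) J) := by
    intro w
    refine ⟨fun i => if h : i ∈ J then w ⟨i, h⟩ else Classical.arbitrary A, ?_⟩
    funext j
    show (if h : j.1 ∈ J then w ⟨j.1, h⟩ else _) = w j
    rw [dif_pos j.2]
  rw [cnt, Set.image_univ, Set.range_eq_univ.mpr hsurj, Set.ncard_univ,
    Nat.card_eq_fintype_card, Fintype.card_fun, Fintype.card_coe]

theorem cnt_enlarge [Nonempty A] {J J' : Finset ℤ} {S : Set (ℤ → A)} (hJJ : J ⊆ J')
    (hS : Supp J S) : cnt J' S = cnt J S * Fintype.card A ^ (J' \ J).card := by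
  have h1 : J ∪ (J' \ J) = J' := Finset.union_sdiff_of_subset hJJ
  calc cnt J' S = cnt (J ∪ (J' \ J)) (S ∩ Set.univ) := by rw [h1, Set.inter_univ]
    _ = cnt J S * Fintype.card A ^ (J' \ J).card := by
        rw [cnt_union_disj hS (supp_univ _) Finset.disjoint_sdiff, cnt_univ]

theorem cnt_mono_radius [Nonempty A] {J J' : Finset ℤ} (hJJ : J ⊆ J') (S : Set (ℤ → A)) :
    cnt J' S ≤ cnt J S * Fintype.card A ^ (J' \ J).card := by
  classical
  set S' : Set (ℤ → A) := {x | restF J x ∈ restF J '' S} with hS'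
  have h1 : S ⊆ S' := fun x hx => ⟨x, hx, rfl⟩
  have h2 : Supp J S' := by
    intro x y hxy hx
    have hr : restF J y = restF J x := by
      funext j; exact (hxy j.1 j.2).symm
    show restF J y ∈ restF J '' S
    rw [hr]; exact hx
  have h3 : cnt J S' = cnt J S := by
    unfold cnt
    congr 1
    refine subset_antisymm ?_ (Set.image_mono h1)
    rintro w ⟨x, hx, rfl⟩
    exact hx
  calc cnt J' S ≤ cnt J' S' := cnt_mono_set h1
    _ = cnt J S' * Fintype.card A ^ (J' \ J).card := cnt_enlarge hJJ h2
    _ = cnt J S * Fintype.card A ^ (J' \ J).card := by rw [h3]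

theorem cnt_translate (i : ℤ) (J : Finset ℤ) (S : Set (ℤ → A)) :
    cnt (J.map (emZ i)) (tr i ⁻¹' S) = cnt J S := by
  classical
  have hbij : Set.BijOn
      (fun w : ((J.map (emZ i) : Finset ℤ) → A) =>
        (fun j : J => w ⟨i + j.1, Finset.mem_map_of_mem _ j.2⟩ : J → A))
      (restF (J.map (emZ i)) '' (tr i ⁻¹' S)) (restF J '' S) := by
    refine ⟨?_, ?_, ?_⟩
    · rintro w ⟨x, hx, rfl⟩
      exact ⟨tr i x, hx, rfl⟩
    · rintro w₁ hw₁ w₂ hw₂ h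
      funext jm
      obtain ⟨j, hj, hji⟩ := Finset.mem_map.mp jm.2
      have hjm : jm = ⟨i + j, Finset.mem_map_of_mem _ hj⟩ := Subtype.ext hji.symm
      rw [hjm]
      exact congrFun h ⟨j, hj⟩
    · rintro a ⟨y, hy, rfl⟩
      refine ⟨restF (J.map (emZ i)) (fun z => y (z - i)), ⟨?_, ?_⟩⟩
      · refine ⟨fun z => y (z - i), ?_, rfl⟩
        show tr i (fun z => y (z - i)) ∈ S
        have : tr i (fun z => y (z - i)) = y := by
          funext j; show y (i + j - i) = y j; congr 1; ring
        rw [this]; exact hy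
      · funext j
        show y (i + j.1 - i) = y j.1
        congr 1; ring
  rw [cnt, cnt, bijOn_ncard hbij]

end FintypeCnt

end S7

namespace S7

variable {A : Type}

/-! ### Cylinders, difference sets -/

def Cyl (n : ℕ) (y : ℤ → A) : Set (ℤ → A) := {z | ∀ j : ℤ, |j| ≤ (n : ℤ) → z j = y j}

def Dst (a b : (ℤ → A) → (ℤ → A)) : Set (ℤ → A) := {x | a x 0 ≠ b x 0}

theorem eval_eq_of_agree {r : ℕ} {f : (ℤ → A) → (ℤ → A)} (hf : HasRadius r f) {x y : ℤ → A}
    {i : ℤ} (h : ∀ j : ℤ, |j - i| ≤ (r : ℤ) → x j = y j) : f x i = f y i := by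
  obtain ⟨F, hF, hFr⟩ := hf
  rw [hFr, hFr]
  refine hF _ _ (fun j hj => ?_)
  refine h (i + j) ?_
  simpa using hj

theorem supp_cyl (n : ℕ) (y : ℤ → A) : Supp (II n) (Cyl n y) := by
  intro x z hxz hx j hj
  rw [← hxz j (mem_II.mpr hj)]
  exact hx j hj

theorem cnt_cyl [Fintype A] (n : ℕ) (y : ℤ → A) : cnt (II n) (Cyl n y) = 1 := by
  have : restF (II n) '' Cyl n y = {restF (II n) y} := by
    apply subset_antisymm
    · rintro w ⟨x, hx, rfl⟩
      have : restF (II n) x = restF (II n) y := by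
        funext j
        exact hx j.1 (mem_II.mp j.2)
      simp [this]
    · rintro w hw
      rw [Set.mem_singleton_iff] at hw
      exact ⟨y, fun j _ => rfl, hw.symm⟩
  rw [cnt, this, Set.ncard_singleton]

theorem supp_preimage {t m : ℕ} {g : (ℤ → A) → (ℤ → A)} (hg : HasRadius t g)
    {D : Set (ℤ → A)} (hD : Supp (II m) D) : Supp (II (m + t)) (g ⁻¹' D) := by
  intro x y hxy hx
  refine hD (g x) (g y) (fun j hj => ?_) hx
  refine eval_eq_of_agree hg (fun k hk => ?_)
  refine hxy k (mem_II.mpr ?_)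
  have h1 := mem_II.mp hj
  have h2 : |k| ≤ |k - j| + |j| := by
    calc |k| = |k - j + j| := by ring_nf
      _ ≤ |k - j| + |j| := abs_add_le _ _
  push_cast
  omega

theorem supp_Dst {m : ℕ} {a b : (ℤ → A) → (ℤ → A)} (ha : HasRadius m a) (hb : HasRadius m b) :
    Supp (II m) (Dst a b) := by
  intro x y hxy hx
  have hagree : ∀ j : ℤ, |j - 0| ≤ (m : ℤ) → x j = y j := by
    intro j hj
    exact hxy j (mem_II.mpr (by simpa using hj))
  show a y 0 ≠ b y 0
  rw [← eval_eq_of_agree ha hagree, ← eval_eq_of_agree hb hagree]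
  exact hx

theorem diffSet_eq [Fintype A] (r : ℕ) (c d : (ℤ → A) → (ℤ → A)) :
    diffSet r c d = restF (II r) '' (Dst c d) := by
  ext w
  constructor
  · rintro ⟨x, hx, hcd⟩
    exact ⟨x, hcd, funext fun j => hx j⟩
  · rintro ⟨x, hcd, rfl⟩
    exact ⟨x, fun j => rfl, hcd⟩

theorem deltaR_eq_cnt [Fintype A] (r : ℕ) (c d : (ℤ → A) → (ℤ → A)) :
    deltaR r c d = (cnt (II r) (Dst c d) : ℝ) / (Fintype.card A : ℝ) ^ (2 * r + 1) := by
  rw [deltaR, diffSet_eq, cnt]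
  rfl

end S7

namespace S7

variable {A : Type} [Fintype A] [Nonempty A]

theorem qR_pos (_hA : 1 ≤ Fintype.card A) (e : ℕ) : (0:ℝ) < (Fintype.card A : ℝ) ^ e := by
  positivity

theorem mem_map_emZ {n : ℕ} {i z : ℤ} : z ∈ (II n).map (emZ i) ↔ |z - i| ≤ (n : ℤ) := by
  simp only [Finset.mem_map, emZ, Function.Embedding.coeFn_mk, II, Finset.mem_Icc]
  constructor
  · rintro ⟨a, ha, rfl⟩
    show |i + a - i| ≤ (n : ℤ)
    rw [abs_le]
    omega
  · intro h
    rw [abs_le] at h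
    exact ⟨z - i, by omega, by show i + (z - i) = z; omega⟩

theorem card_II_sdiff {n k : ℕ} (hsub : II n ⊆ II (n + k)) :
    (II (n + k) \ II n).card = 2 * k := by
  rw [Finset.card_sdiff_of_subset hsub, card_II, card_II]
  omega

theorem II_subset {n m : ℕ} (h : n ≤ m) : II n ⊆ II m := by
  intro z hz
  rw [mem_II] at hz ⊢
  exact hz.trans (by exact_mod_cast h)

/-- monotonicity at cnt level -/
theorem cnt_Dst_anti {n k : ℕ} (c d : (ℤ → A) → (ℤ → A)) :
    cnt (II (n + k)) (Dst c d) ≤ cnt (II n) (Dst c d) * Fintype.card A ^ (2 * k) := by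
  have h := cnt_mono_radius (II_subset (Nat.le_add_right n k)) (Dst c d) (A := A)
  rwa [card_II_sdiff (II_subset (Nat.le_add_right n k))] at h

theorem deltaR_nonneg (_hA : 1 ≤ Fintype.card A) (r : ℕ) (c d : (ℤ → A) → (ℤ → A)) : 0 ≤ deltaR r c d := by
  rw [deltaR_eq_cnt]
  positivity

theorem deltaR_anti (hA : 1 ≤ Fintype.card A) {n m : ℕ} (hnm : n ≤ m)
    (c d : (ℤ → A) → (ℤ → A)) : deltaR m c d ≤ deltaR n c d := by
  obtain ⟨k, rfl⟩ : ∃ k, m = n + k := ⟨m - n, by omega⟩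
  rw [deltaR_eq_cnt, deltaR_eq_cnt]
  rw [div_le_div_iff₀ (qR_pos hA _) (qR_pos hA _)]
  have h := cnt_Dst_anti (n := n) (k := k) c d
  calc (cnt (II (n + k)) (Dst c d) : ℝ) * (Fintype.card A : ℝ) ^ (2 * n + 1)
      ≤ (cnt (II n) (Dst c d) * Fintype.card A ^ (2 * k) : ℕ) * (Fintype.card A : ℝ) ^ (2 * n + 1) := by
        have := (Nat.cast_le (α := ℝ)).mpr h
        exact mul_le_mul_of_nonneg_right this (by positivity)
    _ = (cnt (II n) (Dst c d) : ℝ) * (Fintype.card A : ℝ) ^ (2 * (n + k) + 1) := by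
        push_cast
        rw [show 2 * (n + k) + 1 = 2 * k + (2 * n + 1) from by omega, pow_add]
        ring


theorem deltaR_eq_of_radius (hA : 1 ≤ Fintype.card A) {n m : ℕ} (hnm : n ≤ m)
    {c d : (ℤ → A) → (ℤ → A)} (hc : HasRadius n c) (hd : HasRadius n d) :
    deltaR m c d = deltaR n c d := by
  obtain ⟨k, rfl⟩ : ∃ k, m = n + k := ⟨m - n, by omega⟩
  rw [deltaR_eq_cnt, deltaR_eq_cnt]
  rw [cnt_enlarge (II_subset (Nat.le_add_right n k)) (supp_Dst hc hd),
    card_II_sdiff (II_subset (Nat.le_add_right n k))]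
  rw [div_eq_div_iff (qR_pos hA _).ne' (qR_pos hA _).ne']
  push_cast
  rw [show 2 * (n + k) + 1 = 2 * k + (2 * n + 1) from by omega, pow_add]
  ring

theorem deltaR_pos (_hA : 1 ≤ Fintype.card A) (r : ℕ) {c d : (ℤ → A) → (ℤ → A)}
    (h : (Dst c d).Nonempty) : 0 < deltaR r c d := by
  rw [deltaR_eq_cnt]
  have h1 := cnt_pos (J := II r) h
  have : (0:ℝ) < (cnt (II r) (Dst c d) : ℝ) := by exact_mod_cast h1
  positivity

/-! ### Lemma A : post-composition -/

theorem cnt_post {s m : ℕ} {f a b : (ℤ → A) → (ℤ → A)} (hf : HasRadius s f)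
    (ha : HasRadius m a) (hb : HasRadius m b) :
    cnt (II (m + s)) (Dst (f ∘ a) (f ∘ b)) ≤
      (2 * s + 1) * (cnt (II m) (Dst a b) * Fintype.card A ^ (2 * s)) := by
  classical
  have hsub : Dst (f ∘ a) (f ∘ b) ⊆
      ⋃ i ∈ Finset.Icc (-(s:ℤ)) (s:ℤ), tr i ⁻¹' (Dst a b) := by
    intro x hx
    by_contra hcon
    simp only [Set.mem_iUnion, not_exists] at hcon
    apply hx
    show f (a x) 0 = f (b x) 0
    refine eval_eq_of_agree hf (fun j hj => ?_)
    by_contra hne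
    refine hcon j (Finset.mem_Icc.mpr (abs_le.mp (by simpa using hj))) ?_
    show tr j x ∈ Dst a b
    show a (tr j x) 0 ≠ b (tr j x) 0
    rw [map_tr_zero ha, map_tr_zero hb]
    exact hne
  have h1 : cnt (II (m + s)) (Dst (f ∘ a) (f ∘ b)) ≤
      ∑ i ∈ Finset.Icc (-(s:ℤ)) (s:ℤ), cnt (II (m + s)) (tr i ⁻¹' (Dst a b)) :=
    (cnt_mono_set hsub).trans (cnt_biUnion_le _ _ _)
  have h2 : ∀ i ∈ Finset.Icc (-(s:ℤ)) (s:ℤ),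
      cnt (II (m + s)) (tr i ⁻¹' (Dst a b)) = cnt (II m) (Dst a b) * Fintype.card A ^ (2 * s) := by
    intro i hi
    rw [Finset.mem_Icc] at hi
    have hsubJ : (II m).map (emZ i) ⊆ II (m + s) := by
      intro z hz
      rw [mem_map_emZ] at hz
      rw [mem_II]
      have := abs_sub_abs_le_abs_sub z i
      have hiabs : |i| ≤ (s:ℤ) := abs_le.mpr (by omega)
      push_cast
      omega
    have hsupp := supp_translate (supp_Dst ha hb) i
    rw [cnt_enlarge hsubJ hsupp, cnt_translate]
    congr 1
    have hcard : ((II (m+s)) \ (II m).map (emZ i)).card = 2 * s := by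
      rw [Finset.card_sdiff_of_subset hsubJ, Finset.card_map, card_II, card_II]
      omega
    rw [hcard]
  calc cnt (II (m + s)) (Dst (f ∘ a) (f ∘ b))
      ≤ ∑ i ∈ Finset.Icc (-(s:ℤ)) (s:ℤ), cnt (II (m + s)) (tr i ⁻¹' (Dst a b)) := h1
    _ = ∑ _i ∈ Finset.Icc (-(s:ℤ)) (s:ℤ), cnt (II m) (Dst a b) * Fintype.card A ^ (2 * s) :=
        Finset.sum_congr rfl h2
    _ = (Finset.Icc (-(s:ℤ)) (s:ℤ)).card * (cnt (II m) (Dst a b) * Fintype.card A ^ (2 * s)) := by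
        rw [Finset.sum_const, smul_eq_mul]
    _ = (2 * s + 1) * (cnt (II m) (Dst a b) * Fintype.card A ^ (2 * s)) := by
        rw [Int.card_Icc]
        congr 1
        omega

theorem deltaR_post (hA : 1 ≤ Fintype.card A) {s m : ℕ} {f a b : (ℤ → A) → (ℤ → A)}
    (hf : HasRadius s f) (ha : HasRadius m a) (hb : HasRadius m b) :
    deltaR (m + s) (f ∘ a) (f ∘ b) ≤ (2 * s + 1 : ℝ) * deltaR m a b := by
  rw [deltaR_eq_cnt, deltaR_eq_cnt]
  rw [div_le_iff₀ (qR_pos hA _)]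
  have h := cnt_post hf ha hb
  have hcast : (cnt (II (m + s)) (Dst (f ∘ a) (f ∘ b)) : ℝ) ≤
      (2 * s + 1 : ℝ) * (cnt (II m) (Dst a b) * (Fintype.card A : ℝ) ^ (2 * s)) := by
    exact_mod_cast h
  refine hcast.trans (le_of_eq ?_)
  have hne : ((Fintype.card A : ℝ)) ^ (2 * m + 1) ≠ 0 := (qR_pos hA _).ne'
  rw [show 2 * (m + s) + 1 = (2 * m + 1) + 2 * s from by omega, pow_add]
  field_simp
  ring

end S7

namespace S7

set_option linter.unusedSectionVars false

variable {A : Type} [Fintype A] [Nonempty A]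

/-! ### The balance theorem for reversible CA -/

section Balance

variable {t u : ℕ} {g h : (ℤ → A) → (ℤ → A)}

theorem pre_nonempty (hgh : ∀ x, g (h x) = x) (m : ℕ) (y : ℤ → A) :
    (g ⁻¹' Cyl m y).Nonempty := by
  refine ⟨h y, ?_⟩
  show g (h y) ∈ Cyl m y
  rw [hgh]
  exact fun j _ => rfl

theorem cnt_pre_le (hg : HasRadius t g) (hh : HasRadius u h) (hhg : ∀ x, h (g x) = x)
    {m : ℕ} (hum : u ≤ m) (y : ℤ → A) :
    cnt (II (m + t)) (g ⁻¹' Cyl m y) ≤ Fintype.card A ^ (2 * (t + u)) := by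
  obtain ⟨m₀, rfl⟩ : ∃ m₀, m = u + m₀ := ⟨m - u, by omega⟩
  have hsub : g ⁻¹' Cyl (u + m₀) y ⊆ Cyl m₀ (h y) := by
    intro x hx j hj
    have h1 : x j = h (g x) j := by rw [hhg]
    rw [h1]
    refine eval_eq_of_agree hh (fun k hk => ?_)
    refine hx k ?_
    have : |k| ≤ |k - j| + |j| := by
      calc |k| = |k - j + j| := by ring_nf
        _ ≤ |k - j| + |j| := abs_add_le _ _
    push_cast
    omega
  calc cnt (II (u + m₀ + t)) (g ⁻¹' Cyl (u + m₀) y)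
      ≤ cnt (II (u + m₀ + t)) (Cyl m₀ (h y)) := cnt_mono_set hsub
    _ = cnt (II m₀) (Cyl m₀ (h y)) *
        Fintype.card A ^ ((II (u + m₀ + t) \ II m₀).card) := by
        rw [cnt_enlarge (II_subset (by omega)) (supp_cyl m₀ (h y))]
    _ = Fintype.card A ^ (2 * (t + u)) := by
        rw [cnt_cyl, one_mul, Finset.card_sdiff_of_subset (II_subset (by omega)), card_II, card_II]
        congr 1
        omega

theorem doubling (hg : HasRadius t g) {m : ℕ} {X : ℕ} {y : ℤ → A}
    (hX : X ≤ cnt (II (m + t)) (g ⁻¹' Cyl m y)) :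
    ∃ y' : ℤ → A, X * X ≤
      Fintype.card A ^ (2 * t) * cnt (II ((2 * m + t + 1) + t)) (g ⁻¹' Cyl (2 * m + t + 1) y') := by
  classical
  set q := Fintype.card A with hq
  set o : ℤ := (m : ℤ) + t + 1 with ho
  set m' : ℕ := 2 * m + t + 1 with hm'
  set P : Set (ℤ → A) := g ⁻¹' Cyl m y with hP
  set S₁ : Set (ℤ → A) := tr (-o) ⁻¹' P with hS₁
  set S₂ : Set (ℤ → A) := tr o ⁻¹' P with hS₂
  set W₁ : Finset ℤ := (II (m + t)).map (emZ (-o)) with hW₁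
  set W₂ : Finset ℤ := (II (m + t)).map (emZ o) with hW₂
  have hsuppP : Supp (II (m + t)) P := supp_preimage hg (supp_cyl m y)
  have hsupp₁ : Supp W₁ S₁ := supp_translate hsuppP (-o)
  have hsupp₂ : Supp W₂ S₂ := supp_translate hsuppP o
  have hcnt₁ : cnt W₁ S₁ = cnt (II (m + t)) P := cnt_translate (-o) _ _
  have hcnt₂ : cnt W₂ S₂ = cnt (II (m + t)) P := cnt_translate o _ _
  have hdisj : Disjoint W₁ W₂ := by
    rw [Finset.disjoint_left]
    intro z hz1 hz2
    rw [hW₁, mem_map_emZ, abs_le] at hz1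
    rw [hW₂, mem_map_emZ, abs_le] at hz2
    omega
  have hsubU : W₁ ∪ W₂ ⊆ II (m' + t) := by
    intro z hz
    rw [mem_II]
    rcases Finset.mem_union.mp hz with hz | hz
    · rw [hW₁, mem_map_emZ, abs_le] at hz
      rw [abs_le]
      push_cast
      omega
    · rw [hW₂, mem_map_emZ, abs_le] at hz
      rw [abs_le]
      push_cast
      omega
  have hsdiff : (II (m' + t) \ (W₁ ∪ W₂)).card = 1 := by
    have : II (m' + t) \ (W₁ ∪ W₂) = {0} := by
      ext z
      simp only [Finset.mem_sdiff, Finset.mem_union, Finset.mem_singleton,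
        hW₁, hW₂, mem_map_emZ, mem_II, abs_le]
      push_cast
      omega
    rw [this, Finset.card_singleton]
  have hbig : cnt (II (m' + t)) (S₁ ∩ S₂) = cnt (II (m + t)) P * cnt (II (m + t)) P * q := by
    rw [cnt_enlarge hsubU (supp_inter hsupp₁ hsupp₂), hsdiff, pow_one,
      cnt_union_disj hsupp₁ hsupp₂ hdisj, hcnt₁, hcnt₂]
  -- the covering family
  set Y : (((II t : Finset ℤ)) → A) → (ℤ → A) := fun s j =>
    if hj : j ∈ II t then s ⟨j, hj⟩ else (if j < 0 then y (j + o) else y (j - o)) with hY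
  have hcover : S₁ ∩ S₂ ⊆ ⋃ s ∈ (Finset.univ : Finset (((II t : Finset ℤ)) → A)),
      g ⁻¹' Cyl m' (Y s) := by
    rintro x ⟨hx1, hx2⟩
    have hx1' : ∀ j : ℤ, |j| ≤ (m : ℤ) → g x (-o + j) = y j := by
      intro j hj
      have : g (tr (-o) x) j = y j := hx1 j hj
      rwa [map_tr hg] at this
    have hx2' : ∀ j : ℤ, |j| ≤ (m : ℤ) → g x (o + j) = y j := by
      intro j hj
      have : g (tr o x) j = y j := hx2 j hj
      rwa [map_tr hg] at this
    refine Set.mem_biUnion (Finset.mem_univ (restF (II t) (g x))) ?_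
    intro j hj
    show g x j = Y (restF (II t) (g x)) j
    rw [hY]
    by_cases hjt : j ∈ II t
    · simp only [dif_pos hjt]
      rfl
    · simp only [dif_neg hjt]
      rw [mem_II] at hjt
      rw [abs_le] at hj
      push_cast at hj
      by_cases hj0 : j < 0
      · simp only [if_pos hj0]
        have hb : |j + o| ≤ (m:ℤ) := by
          rw [abs_le] at hjt ⊢
          push_cast at hjt ⊢
          omega
        have h2 := hx1' (j + o) hb
        rw [show -o + (j + o) = j from by ring] at h2
        rw [h2]
      · simp only [if_neg hj0]
        have hb : |j - o| ≤ (m:ℤ) := by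
          rw [abs_le] at hjt ⊢
          push_cast at hjt ⊢
          omega
        have h2 := hx2' (j - o) hb
        rw [show o + (j - o) = j from by ring] at h2
        rw [h2]
  -- pigeonhole
  by_contra hcon
  push_neg at hcon
  have hcon' : ∀ s : ((II t : Finset ℤ)) → A,
      q ^ (2 * t) * cnt (II (m' + t)) (g ⁻¹' Cyl m' (Y s)) ≤ X * X - 1 := by
    intro s
    have := hcon (Y s)
    omega
  have hsum : cnt (II (m' + t)) (S₁ ∩ S₂) ≤
      ∑ s ∈ (Finset.univ : Finset (((II t : Finset ℤ)) → A)),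
        cnt (II (m' + t)) (g ⁻¹' Cyl m' (Y s)) :=
    (cnt_mono_set hcover).trans (cnt_biUnion_le _ _ _)
  have hcardW : (Finset.univ : Finset (((II t : Finset ℤ)) → A)).card = q ^ (2 * t + 1) := by
    rw [Finset.card_univ, Fintype.card_fun, Fintype.card_coe, card_II]
  have hXP : X * X ≤ cnt (II (m + t)) P * cnt (II (m + t)) P :=
    Nat.mul_le_mul hX hX
  have hq1 : 1 ≤ q := Fintype.card_pos
  -- multiply hsum by q^(2t)
  have key : q ^ (2 * t) * (X * X * q) ≤ q ^ (2 * t + 1) * (X * X - 1) := by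
    calc q ^ (2 * t) * (X * X * q) ≤ q ^ (2 * t) * cnt (II (m' + t)) (S₁ ∩ S₂) := by
          rw [hbig]
          exact Nat.mul_le_mul_left _ (by
            calc X * X * q ≤ cnt (II (m + t)) P * cnt (II (m + t)) P * q :=
                  Nat.mul_le_mul_right _ hXP
              _ ≤ _ := le_refl _)
      _ ≤ q ^ (2 * t) * ∑ s ∈ (Finset.univ : Finset (((II t : Finset ℤ)) → A)),
            cnt (II (m' + t)) (g ⁻¹' Cyl m' (Y s)) := Nat.mul_le_mul_left _ hsum
      _ = ∑ s ∈ (Finset.univ : Finset (((II t : Finset ℤ)) → A)),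
            q ^ (2 * t) * cnt (II (m' + t)) (g ⁻¹' Cyl m' (Y s)) := by
          rw [Finset.mul_sum]
      _ ≤ ∑ _s ∈ (Finset.univ : Finset (((II t : Finset ℤ)) → A)), (X * X - 1) :=
          Finset.sum_le_sum (fun s _ => hcon' s)
      _ = q ^ (2 * t + 1) * (X * X - 1) := by
          rw [Finset.sum_const, smul_eq_mul, hcardW]
  have hpos : 1 ≤ X * X := by
    have := hcon y
    omega
  have e1 : q ^ (2 * t) * (X * X * q) = q ^ (2 * t + 1) * (X * X) := by
    rw [pow_succ]; ring
  rw [e1] at key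
  have hqpow : 0 < q ^ (2 * t + 1) := Nat.pow_pos hq1
  have hfin := Nat.le_of_mul_le_mul_left key hqpow
  omega

end Balance

end S7

namespace S7

set_option linter.unusedSectionVars false

variable {A : Type} [Fintype A] [Nonempty A]

noncomputable def extW (J : Finset ℤ) (w : ↥J → A) : ℤ → A :=
  fun j => if hj : j ∈ J then w ⟨j, hj⟩ else Classical.arbitrary A

section Balance2

variable {t u : ℕ} {g h : (ℤ → A) → (ℤ → A)}

/-- The balance theorem for reversible cellular automata: each fiber of the word map of `g`
with margin `t` has at most `q ^ (2t)` elements. -/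
theorem balance (hg : HasRadius t g) (hh : HasRadius u h) (hhg : ∀ x, h (g x) = x)
    (hgh : ∀ x, g (h x) = x) {m : ℕ} (hum : u ≤ m) (y : ℤ → A) :
    cnt (II (m + t)) (g ⁻¹' Cyl m y) ≤ Fintype.card A ^ (2 * t) := by
  set q := Fintype.card A with hq
  by_contra hcon
  push_neg at hcon
  -- grow a too-big fiber indefinitely
  have grow : ∀ k : ℕ, ∃ (m' : ℕ) (y' : ℤ → A), u ≤ m' ∧
      q ^ (2 * t) + 2 ^ k ≤ cnt (II (m' + t)) (g ⁻¹' Cyl m' y') := by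
    intro k
    induction k with
    | zero =>
      exact ⟨m, y, hum, by omega⟩
    | succ n ih =>
      obtain ⟨m', y', hum', hbig⟩ := ih
      obtain ⟨y'', hy''⟩ := doubling hg (le_refl (cnt (II (m' + t)) (g ⁻¹' Cyl m' y')))
      refine ⟨2 * m' + t + 1, y'', by omega, ?_⟩
      set N := cnt (II (m' + t)) (g ⁻¹' Cyl m' y') with hN
      set N' := cnt (II ((2 * m' + t + 1) + t)) (g ⁻¹' Cyl (2 * m' + t + 1) y'') with hN'
      -- N * N ≤ q^(2t) * N' and N ≥ q^(2t) + 2^n  imply  N' ≥ q^(2t) + 2^(n+1)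
      have h1 : (q ^ (2 * t) + 2 ^ n) * (q ^ (2 * t) + 2 ^ n) ≤ q ^ (2 * t) * N' :=
        le_trans (Nat.mul_le_mul hbig hbig) hy''
      have h2 : q ^ (2 * t) * (q ^ (2 * t) + 2 ^ (n + 1)) ≤
          (q ^ (2 * t) + 2 ^ n) * (q ^ (2 * t) + 2 ^ n) := by
        have e : 2 ^ (n + 1) = 2 ^ n + 2 ^ n := by rw [pow_succ]; ring
        nlinarith [sq_nonneg (2 ^ n)]
      have h3 : q ^ (2 * t) * (q ^ (2 * t) + 2 ^ (n + 1)) ≤ q ^ (2 * t) * N' :=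
        le_trans h2 h1
      have hqpos : 0 < q ^ (2 * t) := Nat.pow_pos Fintype.card_pos
      exact Nat.le_of_mul_le_mul_left h3 hqpos
  -- contradiction with the absolute fiber bound
  obtain ⟨m', y', hum', hbig⟩ := grow (q ^ (2 * (t + u)))
  have habs := cnt_pre_le hg hh hhg hum' y'
  rw [← hq] at habs
  have h2k := Nat.lt_two_pow_self (n := q ^ (2 * (t + u)))
  omega

/-- Lemma B (pre-composition by a reversible CA does not increase the distance), cnt level. -/
theorem cnt_pre_comp (hg : HasRadius t g) (hh : HasRadius u h) (hhg : ∀ x, h (g x) = x)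
    (hgh : ∀ x, g (h x) = x) {m : ℕ} (hum : u ≤ m) {a b : (ℤ → A) → (ℤ → A)}
    (hsupp : Supp (II m) (Dst a b)) :
    cnt (II (m + t)) (Dst (a ∘ g) (b ∘ g)) ≤ cnt (II m) (Dst a b) * Fintype.card A ^ (2 * t) := by
  classical
  have hDeq : Dst (a ∘ g) (b ∘ g) = g ⁻¹' (Dst a b) := rfl
  set D := Dst a b with hD
  have hWfin : (restF (II m) '' D).Finite := Set.toFinite _
  set Wf := hWfin.toFinset with hWf
  have hcover : g ⁻¹' D ⊆ ⋃ w ∈ Wf, g ⁻¹' Cyl m (extW (II m) w) := by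
    intro x hx
    refine Set.mem_biUnion (hWfin.mem_toFinset.mpr ⟨g x, hx, rfl⟩) ?_
    intro j hj
    show g x j = extW (II m) (restF (II m) (g x)) j
    rw [extW, dif_pos (mem_II.mpr hj)]
    rfl
  have h1 : cnt (II (m + t)) (g ⁻¹' D) ≤ ∑ w ∈ Wf, cnt (II (m + t)) (g ⁻¹' Cyl m (extW (II m) w)) :=
    (cnt_mono_set hcover).trans (cnt_biUnion_le _ _ _)
  have h2 : ∀ w ∈ Wf, cnt (II (m + t)) (g ⁻¹' Cyl m (extW (II m) w)) ≤ Fintype.card A ^ (2 * t) :=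
    fun w _ => balance hg hh hhg hgh hum (extW (II m) w)
  have h3 : ∑ w ∈ Wf, cnt (II (m + t)) (g ⁻¹' Cyl m (extW (II m) w)) ≤
      Wf.card * Fintype.card A ^ (2 * t) := by
    calc ∑ w ∈ Wf, cnt (II (m + t)) (g ⁻¹' Cyl m (extW (II m) w))
        ≤ ∑ _w ∈ Wf, Fintype.card A ^ (2 * t) := Finset.sum_le_sum h2
      _ = Wf.card * Fintype.card A ^ (2 * t) := by rw [Finset.sum_const, smul_eq_mul]
  have hWcard : Wf.card = cnt (II m) D := by
    rw [hWf]
    exact (Set.ncard_eq_toFinset_card _ hWfin).symm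
  rw [hDeq]
  calc cnt (II (m + t)) (g ⁻¹' D) ≤ Wf.card * Fintype.card A ^ (2 * t) := h1.trans h3
    _ = cnt (II m) D * Fintype.card A ^ (2 * t) := by rw [hWcard]

/-- Lemma B at the level of `deltaR`. -/
theorem deltaR_pre_comp (hA : 1 ≤ Fintype.card A) (hg : HasRadius t g) (hh : HasRadius u h)
    (hhg : ∀ x, h (g x) = x) (hgh : ∀ x, g (h x) = x) {m : ℕ} (hum : u ≤ m)
    {a b : (ℤ → A) → (ℤ → A)} (ha : HasRadius m a) (hb : HasRadius m b) :
    deltaR (m + t) (a ∘ g) (b ∘ g) ≤ deltaR m a b := by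
  rw [deltaR_eq_cnt, deltaR_eq_cnt, div_le_div_iff₀ (qR_pos hA _) (qR_pos hA _)]
  have h := cnt_pre_comp hg hh hhg hgh hum (supp_Dst ha hb)
  calc (cnt (II (m + t)) (Dst (a ∘ g) (b ∘ g)) : ℝ) * (Fintype.card A : ℝ) ^ (2 * m + 1)
      ≤ ((cnt (II m) (Dst a b) * Fintype.card A ^ (2 * t) : ℕ) : ℝ) *
          (Fintype.card A : ℝ) ^ (2 * m + 1) := by
        exact mul_le_mul_of_nonneg_right (by exact_mod_cast h) (by positivity)
    _ = (cnt (II m) (Dst a b) : ℝ) * (Fintype.card A : ℝ) ^ (2 * (m + t) + 1) := by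
        push_cast
        rw [show 2 * (m + t) + 1 = 2 * t + (2 * m + 1) from by omega, pow_add]
        ring

end Balance2

end S7

namespace S7

set_option linter.unusedSectionVars false

variable {A : Type} [Fintype A] [Nonempty A]

theorem chain_subset (F : ℕ → (ℤ → A) → (ℤ → A)) (p : ℕ) :
    Dst (F p) (F 0) ⊆ ⋃ k ∈ Finset.range p, Dst (F (k + 1)) (F k) := by
  intro x hx
  by_contra hcon
  simp only [Set.mem_iUnion, not_exists] at hcon
  apply hx
  show F p x 0 = F 0 x 0
  have key : ∀ k, k ≤ p → F k x 0 = F 0 x 0 := by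
    intro k hk
    induction k with
    | zero => rfl
    | succ n ih =>
      have h1 : ¬ (F (n + 1) x 0 ≠ F n x 0) := fun hne =>
        hcon n (Finset.mem_range.mpr (by omega)) hne
      push_neg at h1
      rw [h1, ih (by omega)]
  exact key p (le_refl p)

theorem deltaR_chain (hA : 1 ≤ Fintype.card A) (F : ℕ → (ℤ → A) → (ℤ → A)) (p N : ℕ) :
    deltaR N (F p) (F 0) ≤ ∑ k ∈ Finset.range p, deltaR N (F (k + 1)) (F k) := by
  have h1 : cnt (II N) (Dst (F p) (F 0)) ≤
      ∑ k ∈ Finset.range p, cnt (II N) (Dst (F (k + 1)) (F k)) :=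
    (cnt_mono_set (chain_subset F p)).trans (cnt_biUnion_le _ _ _)
  have h2 : ∀ k, deltaR N (F (k + 1)) (F k) =
      (cnt (II N) (Dst (F (k + 1)) (F k)) : ℝ) / (Fintype.card A : ℝ) ^ (2 * N + 1) :=
    fun k => deltaR_eq_cnt N _ _
  rw [deltaR_eq_cnt]
  calc (cnt (II N) (Dst (F p) (F 0)) : ℝ) / (Fintype.card A : ℝ) ^ (2 * N + 1)
      ≤ ((∑ k ∈ Finset.range p, cnt (II N) (Dst (F (k + 1)) (F k)) : ℕ) : ℝ) /
          (Fintype.card A : ℝ) ^ (2 * N + 1) := by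
        have h1' : ((cnt (II N) (Dst (F p) (F 0)) : ℕ) : ℝ) ≤
            ((∑ k ∈ Finset.range p, cnt (II N) (Dst (F (k + 1)) (F k)) : ℕ) : ℝ) :=
          Nat.cast_le.mpr h1
        gcongr

    _ = ∑ k ∈ Finset.range p, deltaR N (F (k + 1)) (F k) := by
        push_cast
        rw [Finset.sum_div]
        exact Finset.sum_congr rfl (fun k _ => (h2 k).symm)

end S7


open S7 in
/-- for each `p ≥ 1`, the set of `p`-periodic cellular automata
(those with `c^p = id`) is closed. -/
theorem stmt7 {A : Type} [Fintype A] (hA : 2 ≤ Fintype.card A) (p : ℕ) (hp : 1 ≤ p)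
    (c : (ℤ → A) → (ℤ → A)) (hc : IsCA c)
    (hcl : ∀ ε : ℝ, 0 < ε → ∃ d, IsCA d ∧ d^[p] = id ∧ delta c d < ε) :
    c^[p] = id := by
  classical
  haveI : Nonempty A := Fintype.card_pos_iff.mp (by omega)
  have hq1 : 1 ≤ Fintype.card A := by omega
  by_contra hne
  obtain ⟨x₀, hx₀⟩ := Function.ne_iff.mp hne
  obtain ⟨i₀, hi₀⟩ := Function.ne_iff.mp hx₀
  have hcrad : HasRadius (rad c) c := Nat.sInf_mem hc
  set rc := rad c with hrc
  have hcp : HasRadius (p * rc) (c^[p]) := hasRadius_iterate hcrad p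
  have hid : HasRadius (p * rc) (id : (ℤ → A) → (ℤ → A)) :=
    hasRadius_mono hasRadius_id (Nat.zero_le _)
  have hDne : (Dst (c^[p]) (id : (ℤ → A) → (ℤ → A))).Nonempty := by
    refine ⟨tr i₀ x₀, ?_⟩
    show c^[p] (tr i₀ x₀) 0 ≠ id (tr i₀ x₀) 0
    rw [map_tr_zero hcp]
    show c^[p] x₀ i₀ ≠ x₀ (i₀ + 0)
    rw [add_zero]
    exact hi₀
  set ε₀ := deltaR (p * rc) (c^[p]) (id : (ℤ → A) → (ℤ → A)) with hε₀def
  have hε₀ : 0 < ε₀ := deltaR_pos hq1 _ hDne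
  set K : ℕ := p * (2 * (p * rc) + 1) with hK
  have hKpos : 0 < K := Nat.mul_pos hp (by omega)
  have hKposR : (0:ℝ) < (K:ℝ) := by exact_mod_cast hKpos
  obtain ⟨d, hdCA, hdp, hδ⟩ := hcl (ε₀ / K) (by positivity)
  have hdrad : HasRadius (rad d) d := Nat.sInf_mem hdCA
  set rd := rad d with hrd
  set m₁ := max rc rd with hm₁
  have hc1 : HasRadius m₁ c := hasRadius_mono hcrad (le_max_left _ _)
  have hd1 : HasRadius m₁ d := hasRadius_mono hdrad (le_max_right _ _)
  have hδ' : deltaR m₁ c d < ε₀ / K := hδ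
  set N := m₁ + p * rd + p * rc with hN
  set e : ℕ → (ℤ → A) → (ℤ → A) := fun k => (c^[k]) ∘ (d^[p - k]) with he
  have hterm : ∀ k, k < p →
      deltaR N (e (k + 1)) (e k) ≤ (2 * (p * rc : ℕ) + 1 : ℝ) * deltaR m₁ c d := by
    intro k hk
    have hg : HasRadius ((p - 1 - k) * rd) (d^[p - 1 - k]) := hasRadius_iterate hdrad _
    have hh : HasRadius ((k + 1) * rd) (d^[k + 1]) := hasRadius_iterate hdrad _
    have hinv1 : ∀ x, d^[k + 1] (d^[p - 1 - k] x) = x := by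
      intro x
      rw [← Function.iterate_add_apply, show (k + 1) + (p - 1 - k) = p from by omega, hdp]
      rfl
    have hinv2 : ∀ x, d^[p - 1 - k] (d^[k + 1] x) = x := by
      intro x
      rw [← Function.iterate_add_apply, show (p - 1 - k) + (k + 1) = p from by omega, hdp]
      rfl
    have hca : HasRadius (m₁ + (k + 1) * rd) c := hasRadius_mono hc1 (by omega)
    have hcb : HasRadius (m₁ + (k + 1) * rd) d := hasRadius_mono hd1 (by omega)
    have hB : deltaR ((m₁ + (k + 1) * rd) + (p - 1 - k) * rd)
        (c ∘ d^[p - 1 - k]) (d ∘ d^[p - 1 - k]) ≤ deltaR (m₁ + (k + 1) * rd) c d :=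
      deltaR_pre_comp hq1 hg hh hinv1 hinv2 (by omega) hca hcb
    set mA := (m₁ + (k + 1) * rd) + (p - 1 - k) * rd with hmA
    have hfa : HasRadius mA (c ∘ d^[p - 1 - k]) := by
      refine hasRadius_mono (hasRadius_comp hc1 hg) (by omega)
    have hfb : HasRadius mA (d ∘ d^[p - 1 - k]) := by
      refine hasRadius_mono (hasRadius_comp hd1 hg) (by omega)
    have hfk : HasRadius (k * rc) (c^[k]) := hasRadius_iterate hcrad k
    have hA2 : deltaR (mA + k * rc) (c^[k] ∘ (c ∘ d^[p - 1 - k])) (c^[k] ∘ (d ∘ d^[p - 1 - k])) ≤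
        (2 * (k * rc : ℕ) + 1 : ℝ) * deltaR mA (c ∘ d^[p - 1 - k]) (d ∘ d^[p - 1 - k]) := by
      have := deltaR_post hq1 hfk hfa hfb
      convert this using 2 <;> push_cast <;> ring
    have he1 : c^[k] ∘ (c ∘ d^[p - 1 - k]) = e (k + 1) := by
      simp only [he]
      rw [Function.iterate_succ, show p - (k + 1) = p - 1 - k from by omega]
      rfl
    have he0 : c^[k] ∘ (d ∘ d^[p - 1 - k]) = e k := by
      simp only [he]
      rw [show p - k = (p - 1 - k) + 1 from by omega, Function.iterate_succ']
    rw [he1, he0] at hA2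
    have hprd : (k + 1) * rd + (p - 1 - k) * rd = p * rd := by
      rw [← Nat.add_mul]
      congr 1
      omega
    have hmono1 : deltaR N (e (k + 1)) (e k) ≤ deltaR (mA + k * rc) (e (k + 1)) (e k) := by
      refine deltaR_anti hq1 ?_ _ _
      have hkrc : k * rc ≤ p * rc := Nat.mul_le_mul_right rc (by omega)
      rw [hmA, hN]
      omega
    have hmono2 : deltaR (m₁ + (k + 1) * rd) c d ≤ deltaR m₁ c d :=
      deltaR_anti hq1 (by omega) _ _
    have hBfull : deltaR mA (c ∘ d^[p - 1 - k]) (d ∘ d^[p - 1 - k]) ≤ deltaR m₁ c d :=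
      hB.trans hmono2
    have hcoef : (2 * (k * rc : ℕ) + 1 : ℝ) ≤ (2 * (p * rc : ℕ) + 1 : ℝ) := by
      have : (k * rc : ℕ) ≤ (p * rc : ℕ) := Nat.mul_le_mul_right rc (by omega)
      push_cast
      exact_mod_cast by omega
    calc deltaR N (e (k + 1)) (e k) ≤ deltaR (mA + k * rc) (e (k + 1)) (e k) := hmono1
      _ ≤ (2 * (k * rc : ℕ) + 1 : ℝ) * deltaR mA (c ∘ d^[p - 1 - k]) (d ∘ d^[p - 1 - k]) := hA2
      _ ≤ (2 * (k * rc : ℕ) + 1 : ℝ) * deltaR m₁ c d := by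
          refine mul_le_mul_of_nonneg_left hBfull (by positivity)
      _ ≤ (2 * (p * rc : ℕ) + 1 : ℝ) * deltaR m₁ c d := by
          refine mul_le_mul_of_nonneg_right hcoef (deltaR_nonneg hq1 _ _ _)
  have hchain := deltaR_chain hq1 e p N
  have heP : e p = c^[p] := by
    simp only [he, Nat.sub_self, Function.iterate_zero, Function.comp_id]
  have he0' : e 0 = id := by
    simp only [he, Nat.sub_zero, Function.iterate_zero, hdp, Function.id_comp]
  rw [heP, he0'] at hchain
  have hsum : ∑ k ∈ Finset.range p, deltaR N (e (k + 1)) (e k) ≤ (K:ℝ) * deltaR m₁ c d := by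
    calc ∑ k ∈ Finset.range p, deltaR N (e (k + 1)) (e k)
        ≤ ∑ _k ∈ Finset.range p, (2 * (p * rc : ℕ) + 1 : ℝ) * deltaR m₁ c d :=
          Finset.sum_le_sum (fun k hk => hterm k (Finset.mem_range.mp hk))
      _ = (p : ℝ) * ((2 * (p * rc : ℕ) + 1 : ℝ) * deltaR m₁ c d) := by
          rw [Finset.sum_const, Finset.card_range, nsmul_eq_mul]
      _ = (K:ℝ) * deltaR m₁ c d := by
          rw [hK]
          push_cast
          ring
  have heq : deltaR N (c^[p]) (id : (ℤ → A) → (ℤ → A)) = ε₀ := by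
    rw [hε₀def]
    refine deltaR_eq_of_radius hq1 ?_ hcp hid
    rw [hN]
    omega
  have hfinal : ε₀ ≤ (K:ℝ) * deltaR m₁ c d := by
    rw [← heq]
    exact hchain.trans hsum
  have hlt : (K:ℝ) * deltaR m₁ c d < (K:ℝ) * (ε₀ / K) := by
    exact mul_lt_mul_of_pos_left hδ' hKposR
  rw [mul_div_cancel₀ _ hKposR.ne'] at hlt
  linarith
end

section
/- The uniform Bernoulli metric space of cellular automata has no isolated points: for every cellular automaton c and every ε > 0 there exists a cellular automaton d ≠ c with δ(c,d) < ε. (One may take d with radius r(c)+i agreeing with c on all centered words of radius r(c)+i except the all-zero word.) -/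
open MeasureTheory Filter Function

/-- the uniform Bernoulli space of cellular automata has no isolated
points. -/
theorem stmt8 {A : Type} [Fintype A] (hA : 2 ≤ Fintype.card A)
    (c : (ℤ → A) → (ℤ → A)) (hc : IsCA c) (ε : ℝ) (hε : 0 < ε) :
    ∃ d, IsCA d ∧ d ≠ c ∧ delta c d < ε := by
  classical
  have hne : {r : ℕ | HasRadius r c}.Nonempty := hc
  have hradc : HasRadius (rad c) c := Nat.sInf_mem hne
  obtain ⟨F, hFloc, hFc⟩ := hradc
  have hApos : 0 < Fintype.card A := by omega
  have : Nonempty A := Fintype.card_pos_iff.mp hApos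
  obtain ⟨a0⟩ := this
  set z : ℤ → A := fun _ => a0 with hz
  obtain ⟨alt, halt⟩ := Fintype.exists_ne_of_one_lt_card (by omega) (F z)
  obtain ⟨b0, hb0⟩ := Fintype.exists_ne_of_one_lt_card (by omega) a0
  obtain ⟨N, hN⟩ := exists_nat_gt (1 / ε)
  set R : ℕ := max (rad c + 1) N with hRdef
  have hr0R : rad c < R := lt_of_lt_of_le (Nat.lt_succ_self _) (le_max_left _ _)
  have hNR : N ≤ R := le_max_right _ _
  -- the perturbed automaton
  set d : (ℤ → A) → (ℤ → A) :=
    fun x i => if (∀ j : ℤ, |j| ≤ (R : ℤ) → x (i + j) = a0) then alt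
               else F (fun j => x (i + j)) with hd
  -- d has radius R
  have hdR : HasRadius R d := by
    refine ⟨fun x => if (∀ j : ℤ, |j| ≤ (R : ℤ) → x j = a0) then alt else F x, ?_, ?_⟩
    · intro x y hxy
      show (if (∀ j : ℤ, |j| ≤ (R : ℤ) → x j = a0) then alt else F x) =
        (if (∀ j : ℤ, |j| ≤ (R : ℤ) → y j = a0) then alt else F y)
      have hcond : (∀ j : ℤ, |j| ≤ (R : ℤ) → x j = a0) ↔
          (∀ j : ℤ, |j| ≤ (R : ℤ) → y j = a0) := by
        constructor
        · intro h j hj; rw [← hxy j hj]; exact h j hj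
        · intro h j hj; rw [hxy j hj]; exact h j hj
      have hFxy : F x = F y := hFloc x y fun j hj =>
        hxy j (le_trans hj (by exact_mod_cast hr0R.le))
      by_cases h : ∀ j : ℤ, |j| ≤ (R : ℤ) → x j = a0
      · rw [if_pos h, if_pos (hcond.mp h)]
      · rw [if_neg h, if_neg (fun h' => h (hcond.mpr h'))]; exact hFxy
    · intro x i; rfl
  -- every radius of d is at least R
  have hdlow : ∀ r : ℕ, HasRadius r d → R ≤ r := by
    intro r hr
    by_contra hlt
    push_neg at hlt
    obtain ⟨G, hGloc, hGd⟩ := hr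
    set y : ℤ → A := fun j => if j = (R : ℤ) then b0 else a0 with hy
    have hdz : d z 0 = alt := by
      rw [hd]; exact if_pos (fun j _ => rfl)
    have hdy : d y 0 = F z := by
      show (if (∀ j : ℤ, |j| ≤ (R : ℤ) → y (0 + j) = a0) then alt
        else F fun j => y (0 + j)) = F z
      rw [if_neg ?_]
      · apply hFloc
        intro j hj
        have hjne : (0 : ℤ) + j ≠ (R : ℤ) := by
          have : |j| < (R : ℤ) := lt_of_le_of_lt hj (by exact_mod_cast hr0R)
          have := abs_lt.mp this
          omega
        show (if (0 : ℤ) + j = (R : ℤ) then b0 else a0) = a0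
        rw [if_neg hjne]
      · intro h
        have := h (R : ℤ) (by simp)
        simp only [hy, zero_add, if_pos rfl] at this
        exact hb0 this
    have hagree : d z 0 = d y 0 := by
      rw [hGd z 0, hGd y 0]
      apply hGloc
      intro j hj
      have hjne : (0 : ℤ) + j ≠ (R : ℤ) := by
        have : |j| < (R : ℤ) := lt_of_le_of_lt hj (by exact_mod_cast hlt)
        have := abs_lt.mp this
        omega
      show a0 = (if (0 : ℤ) + j = (R : ℤ) then b0 else a0)
      rw [if_neg hjne]
    rw [hdz, hdy] at hagree
    exact halt hagree
  have hdIsCA : IsCA d := ⟨R, hdR⟩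
  have hraddle : rad d ≤ R := Nat.sInf_le hdR
  have hraddge : R ≤ rad d := le_csInf ⟨R, hdR⟩ fun r hr => hdlow r hr
  have hradd : rad d = R := le_antisymm hraddle hraddge
  -- d ≠ c
  have hcz : c z 0 = F z := by
    rw [hFc z 0]
  have hdz : d z 0 = alt := by
    rw [hd]; exact if_pos (fun j _ => rfl)
  have hdc : d ≠ c := by
    intro h
    apply halt
    rw [← hdz, h, hcz]
  -- the difference set at radius R is a singleton
  set w0 : Word A R := fun _ => a0 with hw0
  have hdiff : diffSet R c d = {w0} := by
    ext w
    constructor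
    · rintro ⟨x, hx, hxne⟩
      have hcond : ∀ j : ℤ, |j| ≤ (R : ℤ) → x (0 + j) = a0 := by
        by_contra hcondn
        apply hxne
        rw [hFc x 0]
        show F (fun j => x (0 + j)) =
          (if (∀ j : ℤ, |j| ≤ (R : ℤ) → x (0 + j) = a0) then alt
            else F fun j => x (0 + j))
        rw [if_neg hcondn]
      have : w = w0 := by
        funext j
        have hj := j.2
        rw [Finset.mem_Icc] at hj
        have habs : |(j : ℤ)| ≤ (R : ℤ) := abs_le.mpr hj
        have := hcond j habs
        rw [zero_add] at this
        rw [← hx j, this]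
      simp [this]
    · intro hw
      simp only [Set.mem_singleton_iff] at hw
      subst hw
      refine ⟨z, fun j => rfl, ?_⟩
      rw [hcz, hdz]
      exact fun h => halt h.symm
  -- compute delta
  have hmax : max (rad c) (rad d) = R := by
    rw [hradd]; exact max_eq_right hr0R.le
  have hdelta : delta c d = 1 / (Fintype.card A : ℝ) ^ (2 * R + 1) := by
    rw [delta, hmax, deltaR, hdiff, Set.ncard_singleton]
    norm_num
  refine ⟨d, hdIsCA, hdc, ?_⟩
  rw [hdelta]
  have hpow : (1 : ℝ) / ε < (Fintype.card A : ℝ) ^ (2 * R + 1) := by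
    have h1 : (N : ℝ) ≤ (R : ℝ) := by exact_mod_cast hNR
    have h2 : (R : ℝ) < (2 : ℝ) ^ R := by
      exact_mod_cast (Nat.lt_two_pow_self (n := R))
    have h3 : (2 : ℝ) ^ R ≤ (2 : ℝ) ^ (2 * R + 1) :=
      pow_le_pow_right₀ one_le_two (by omega)
    have h4 : (2 : ℝ) ^ (2 * R + 1) ≤ (Fintype.card A : ℝ) ^ (2 * R + 1) := by
      apply pow_le_pow_left₀ (by norm_num)
      exact_mod_cast hA
    linarith
  have hXpos : (0 : ℝ) < (Fintype.card A : ℝ) ^ (2 * R + 1) := by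
    apply pow_pos
    exact_mod_cast hApos
  rw [div_lt_iff₀ hXpos]
  rw [div_lt_iff₀ hε] at hpow
  linarith
end

section
/- The uniform Bernoulli metric space of cellular automata is not complete: there exists a Cauchy sequence (cᵢ) of cellular automata with no limit in CA. -/
open MeasureTheory Filter Function

set_option linter.unusedSectionVars false

section Cons
open Classical
variable {A : Type} [Fintype A]

/-- Cumulative block endpoints: block `l` occupies `(Nblk l, Nblk (l+1)]`, length `l+3`. -/
def Nblk : ℕ → ℕ
  | 0 => 0
  | l + 1 => Nblk l + (l + 3)

lemma Nblk_lt (l : ℕ) : Nblk l < Nblk (l + 1) := by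
  simp [Nblk]

lemma Nblk_mono : StrictMono Nblk := strictMono_nat_of_lt_succ Nblk_lt

lemma le_Nblk (l : ℕ) : l ≤ Nblk l := by
  induction l with
  | zero => simp [Nblk]
  | succ n ih => have := Nblk_lt n; omega

/-- Block `l` as a finset of positions. -/
noncomputable def blk (l : ℕ) : Finset ℤ := Finset.Ioc (Nblk l : ℤ) (Nblk (l + 1) : ℤ)

lemma blk_card (l : ℕ) : (blk l).card = l + 3 := by
  simp only [blk, Int.card_Ioc]
  have := Nblk_lt l
  simp [Nblk]
  omega

lemma mem_blk {j : ℤ} {l : ℕ} (h : j ∈ blk l) :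
    (Nblk l : ℤ) < j ∧ j ≤ (Nblk (l + 1) : ℤ) := by
  simpa [blk] using h

lemma blk_pos {j : ℤ} {l : ℕ} (h : j ∈ blk l) : 0 < j := by
  have := (mem_blk h).1
  have : (0 : ℤ) ≤ (Nblk l : ℤ) := Int.natCast_nonneg _
  omega

lemma blk_le {j : ℤ} {l i : ℕ} (h : j ∈ blk l) (hl : l < i) : j ≤ (Nblk i : ℤ) := by
  have h2 := (mem_blk h).2
  have : Nblk (l + 1) ≤ Nblk i := Nblk_mono.le_iff_le.2 hl
  exact h2.trans (by exact_mod_cast this)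

lemma blk_disjoint {j : ℤ} {l l' : ℕ} (h : j ∈ blk l) (h' : j ∈ blk l') : l = l' := by
  by_contra hne
  rcases Nat.lt_or_ge l l' with hlt | hge
  · have := (mem_blk h).2
    have := (mem_blk h').1
    have : Nblk (l + 1) ≤ Nblk l' := Nblk_mono.le_iff_le.2 hlt
    omega
  · have hlt : l' < l := lt_of_le_of_ne hge (Ne.symm hne)
    have := (mem_blk h').2
    have := (mem_blk h).1
    have : Nblk (l' + 1) ≤ Nblk l := Nblk_mono.le_iff_le.2 hlt
    omega

variable (z b : A) (τ : A → A)

/-- Number of all-`z` blocks among the first `i` blocks. -/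
noncomputable def zcount (i : ℕ) (x : ℤ → A) : ℕ :=
  ((Finset.range i).filter (fun l => ∀ j ∈ blk l, x j = z)).card

/-- The local rule of the `i`-th automaton. -/
noncomputable def csF (i : ℕ) (u : ℤ → A) : A := τ^[zcount z i u] (u 0)

/-- The Cauchy sequence of automata. -/
noncomputable def csSeq (i : ℕ) (x : ℤ → A) : ℤ → A := fun m => csF z τ i (fun j => x (m + j))

lemma zcount_congr {i : ℕ} {x y : ℤ → A} (h : ∀ j : ℤ, 0 < j → j ≤ (Nblk i : ℤ) → x j = y j) :
    zcount z i x = zcount z i y := by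
  unfold zcount
  congr 1
  apply Finset.filter_congr
  intro l hl
  have hl' : l < i := Finset.mem_range.1 hl
  constructor
  all_goals intro hz j hj
  · rw [← h j (blk_pos hj) (blk_le hj hl')]; exact hz j hj
  · rw [h j (blk_pos hj) (blk_le hj hl')]; exact hz j hj

lemma csSeq_apply (i : ℕ) (x : ℤ → A) (m : ℤ) :
    csSeq z τ i x m = τ^[zcount z i (fun j => x (m + j))] (x (m + 0)) := rfl

lemma csSeq_apply_zero (i : ℕ) (x : ℤ → A) :
    csSeq z τ i x 0 = τ^[zcount z i x] (x 0) := by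
  have hx : (fun j => x (0 + j)) = x := funext fun j => by rw [zero_add]
  rw [csSeq_apply, hx]
  norm_num

lemma hasRadius_csSeq (i : ℕ) : HasRadius (Nblk i) (csSeq z τ i) := by
  refine ⟨csF z τ i, fun x y h => ?_, fun x m => rfl⟩
  unfold csF
  have h0 : x 0 = y 0 := h 0 (by simp)
  rw [h0, zcount_congr z (i := i) (x := x) (y := y) ?_]
  intro j hj hj'
  exact h j (by rw [abs_of_pos hj]; exact hj')

lemma isCA_csSeq (i : ℕ) : IsCA (csSeq z τ i) := ⟨_, hasRadius_csSeq z τ i⟩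

end Cons
set_option linter.unusedSectionVars false

section Cons2
open Classical
variable {A : Type} [Fintype A] (z b : A) (τ : A → A)

lemma hasRadius_mono {r r' : ℕ} {f : (ℤ → A) → (ℤ → A)} (h : HasRadius r f) (hrr : r ≤ r') :
    HasRadius r' f := by
  obtain ⟨F, hF, hf⟩ := h
  exact ⟨F, fun x y hxy => hF x y (fun j hj => hxy j (hj.trans (by exact_mod_cast hrr))), hf⟩

lemma hasRadius_rad {f : (ℤ → A) → (ℤ → A)} (h : IsCA f) : HasRadius (rad f) f :=
  Nat.sInf_mem h

lemma rad_le {r : ℕ} {f : (ℤ → A) → (ℤ → A)} (h : HasRadius r f) : rad f ≤ r :=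
  Nat.sInf_le h

/-- Padding a word with the letter `b` outside the window. -/
noncomputable def pad (R : ℕ) (w : Word A R) : ℤ → A :=
  fun j => if h : j ∈ Finset.Icc (-(R : ℤ)) (R : ℤ) then w ⟨j, h⟩ else b

lemma pad_extends (R : ℕ) (w : Word A R) :
    ∀ j : (Finset.Icc (-(R : ℤ)) (R : ℤ) : Finset ℤ), pad b R w j.1 = w j := by
  intro j
  simp only [pad, dif_pos j.2]

lemma pad_mem {R : ℕ} (w : Word A R) {j : ℤ} (h : j ∈ Finset.Icc (-(R : ℤ)) (R : ℤ)) :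
    pad b R w j = w ⟨j, h⟩ := dif_pos h

lemma pad_not_mem {R : ℕ} (w : Word A R) {j : ℤ} (h : j ∉ Finset.Icc (-(R : ℤ)) (R : ℤ)) :
    pad b R w j = b := dif_neg h

lemma eval_eq_of_hasRadius {R : ℕ} {c : (ℤ → A) → (ℤ → A)} (hc : HasRadius R c)
    {x y : ℤ → A} (h : ∀ j : ℤ, |j| ≤ (R : ℤ) → x j = y j) : c x 0 = c y 0 := by
  obtain ⟨F, hF, hf⟩ := hc
  rw [hf x 0, hf y 0]
  exact hF _ _ (fun j hj => by simpa using h j hj)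

lemma mem_diffSet_iff {R : ℕ} {c d : (ℤ → A) → (ℤ → A)} (hc : HasRadius R c)
    (hd : HasRadius R d) (w : Word A R) :
    w ∈ diffSet R c d ↔ c (pad b R w) 0 ≠ d (pad b R w) 0 := by
  constructor
  · rintro ⟨x, hx, hne⟩
    have agree : ∀ j : ℤ, |j| ≤ (R : ℤ) → x j = pad b R w j := by
      intro j hj
      have hmem : j ∈ Finset.Icc (-(R : ℤ)) (R : ℤ) := by
        rw [Finset.mem_Icc]; constructor <;> [exact neg_le_of_abs_le hj; exact le_of_abs_le hj]
      rw [pad_mem b w hmem]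
      exact hx ⟨j, hmem⟩
    rw [← eval_eq_of_hasRadius hc agree, ← eval_eq_of_hasRadius hd agree]
    exact hne
  · intro h
    exact ⟨pad b R w, pad_extends b R w, h⟩

/-- modify a configuration on one block, from all-`z` to not-all-`z`: the count drops by one -/
lemma zcount_modify {i l₀ : ℕ} (hl₀ : l₀ < i) {x y : ℤ → A}
    (hxy : ∀ j, j ∉ blk l₀ → x j = y j)
    (hx : ∀ j ∈ blk l₀, x j = z)
    (hy : ∃ j ∈ blk l₀, y j ≠ z) :
    zcount z i x = zcount z i y + 1 := by
  unfold zcount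
  have key : ((Finset.range i).filter (fun l => ∀ j ∈ blk l, x j = z)) =
      insert l₀ ((Finset.range i).filter (fun l => ∀ j ∈ blk l, y j = z)) := by
    ext l
    simp only [Finset.mem_insert, Finset.mem_filter, Finset.mem_range]
    constructor
    · rintro ⟨hli, hall⟩
      by_cases hl : l = l₀
      · exact Or.inl hl
      · refine Or.inr ⟨hli, fun j hj => ?_⟩
        rw [← hxy j (fun hj' => hl (blk_disjoint hj hj'))]
        exact hall j hj
    · rintro (hl | ⟨hli, hall⟩)
      · exact ⟨hl ▸ hl₀, hl ▸ hx⟩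
      · by_cases hl : l = l₀
        · subst hl
          obtain ⟨j, hj, hjne⟩ := hy
          exact absurd (hall j hj) hjne
        · refine ⟨hli, fun j hj => ?_⟩
          rw [hxy j (fun hj' => hl (blk_disjoint hj hj'))]
          exact hall j hj
  rw [key, Finset.card_insert_of_notMem]
  simp only [Finset.mem_filter, Finset.mem_range, not_and]
  intro _
  obtain ⟨j, hj, hjne⟩ := hy
  exact fun hall => hjne (hall j hj)

lemma nblk_le_of_hasRadius (hbz : b ≠ z) (hτ : ∀ a, τ a ≠ a) {i r : ℕ} (hi : 1 ≤ i)
    (h : HasRadius r (csSeq z τ i)) : Nblk i ≤ r := by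
  by_contra hr
  push_neg at hr
  set x : ℤ → A := fun _ => z with hxdef
  set y : ℤ → A := fun j => if j = (Nblk i : ℤ) then b else z with hydef
  have hNi : 1 ≤ Nblk i := le_trans hi (le_Nblk i)
  have hmem : (Nblk i : ℤ) ∈ blk (i - 1) := by
    have h1 : i - 1 + 1 = i := Nat.succ_pred_eq_of_pos hi
    have h2 := Nblk_lt (i - 1)
    rw [h1] at h2
    simp only [blk, h1, Finset.mem_Ioc]
    exact ⟨by exact_mod_cast h2, le_refl _⟩
  have hcount : zcount z i x = zcount z i y + 1 := by
    refine zcount_modify z (Nat.sub_lt hi one_pos) ?_ (fun j _ => rfl) ⟨(Nblk i : ℤ), hmem, by simp [hydef, hbz]⟩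
    intro j hj
    simp only [hydef, hxdef]
    rw [if_neg]
    intro hje
    exact hj (hje ▸ hmem)
  have hy0 : y 0 = z := by
    simp only [hydef]
    rw [if_neg]
    intro h0
    have : (0 : ℤ) < (Nblk i : ℤ) := by exact_mod_cast hNi
    omega
  have hx0 : x 0 = z := rfl
  have hvals : csSeq z τ i x 0 ≠ csSeq z τ i y 0 := by
    rw [csSeq_apply_zero, csSeq_apply_zero, hx0, hy0, hcount, Function.iterate_succ_apply']
    exact hτ _
  apply hvals
  apply eval_eq_of_hasRadius h
  intro j hj
  simp only [hxdef, hydef]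
  rw [if_neg]
  intro hje
  subst hje
  have : (r : ℤ) < (Nblk i : ℤ) := by exact_mod_cast hr
  rw [abs_of_pos (by exact_mod_cast hNi)] at hj
  omega

lemma nblk_le_rad (hbz : b ≠ z) (hτ : ∀ a, τ a ≠ a) {i : ℕ} (hi : 1 ≤ i) :
    Nblk i ≤ rad (csSeq z τ i) :=
  nblk_le_of_hasRadius z b τ hbz hτ hi (hasRadius_rad (isCA_csSeq z τ i))

end Cons2
section Count
open Classical
variable {A : Type} [Fintype A]

noncomputable instance wordFintype (R : ℕ) : Fintype (Word A R) := by
  unfold Word; infer_instance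

/-- Counting functions forced to equal `z` on a subset of coordinates. -/
lemma card_forced {ι : Type} [Fintype ι] [DecidableEq ι] (z : A) (S : Finset ι) :
    (Finset.univ.filter (fun w : ι → A => ∀ j ∈ S, w j = z)).card =
      Fintype.card A ^ (Fintype.card ι - S.card) := by
  have e : {w : ι → A // ∀ j ∈ S, w j = z} ≃ ({j : ι // j ∉ S} → A) :=
    { toFun := fun w j => w.1 j.1
      invFun := fun g => ⟨fun j => if h : j ∈ S then z else g ⟨j, h⟩, fun j hj => dif_pos hj⟩
      left_inv := by
        rintro ⟨w, hw⟩
        apply Subtype.ext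
        funext j
        by_cases h : j ∈ S
        · simp only [dif_pos h]; exact (hw j h).symm
        · simp only [dif_neg h]
      right_inv := by
        intro g
        funext j
        simp only [dif_neg j.2] }
  rw [← Fintype.card_subtype, Fintype.card_congr e, Fintype.card_fun]
  congr 1
  rw [Fintype.card_subtype]
  have : Finset.univ.filter (fun j : ι => j ∉ S) = Sᶜ := by
    ext j; simp [Finset.mem_compl]
  rw [this, Finset.card_compl]

lemma card_Icc_window (R : ℕ) :
    (Finset.Icc (-(R : ℤ)) (R : ℤ)).card = 2 * R + 1 := by
  rw [Int.card_Icc]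
  omega

lemma card_word (R : ℕ) : Fintype.card (Word A R) = Fintype.card A ^ (2 * R + 1) := by
  have : Fintype.card (Word A R) =
      Fintype.card A ^ (Fintype.card ((Finset.Icc (-(R : ℤ)) (R : ℤ) : Finset ℤ) : Type)) := by
    unfold Word
    convert Fintype.card_fun <;> infer_instance
  rw [this, Fintype.card_coe, card_Icc_window]

lemma geom_tail_le (m n : ℕ) :
    ∑ l ∈ Finset.Ico m n, ((1 : ℝ) / 2) ^ (l + 3) ≤ (1 / 2) ^ (m + 2) := by
  rcases le_or_gt m n with hmn | hmn
  · have key : ∀ k : ℕ, ∑ l ∈ Finset.Ico m (m + k), ((1 : ℝ) / 2) ^ (l + 3) ≤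
        (1 / 2) ^ (m + 2) - (1 / 2) ^ (m + k + 2) := by
      intro k
      induction k with
      | zero => simp
      | succ k ih =>
        rw [← Nat.add_assoc, Finset.sum_Ico_succ_top (Nat.le_add_right m k)]
        have h2 : ((1 : ℝ) / 2) ^ (m + k + 3) + (1 / 2) ^ (m + k + 3) = (1 / 2) ^ (m + k + 2) := by
          rw [show m + k + 3 = (m + k + 2) + 1 by omega, pow_succ]
          ring
        have := add_le_add_left ih (((1 : ℝ) / 2) ^ (m + k + 3))
        calc ∑ l ∈ Finset.Ico m (m + k), ((1 : ℝ) / 2) ^ (l + 3) + (1 / 2) ^ (m + k + 3)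
            ≤ (1 / 2) ^ (m + 2) - (1 / 2) ^ (m + k + 2) + (1 / 2) ^ (m + k + 3) := this
          _ ≤ (1 / 2) ^ (m + 2) - (1 / 2) ^ (m + k + 1 + 2) := by
              rw [show m + k + 1 + 2 = m + k + 3 by omega]
              linarith [h2]
    obtain ⟨k, rfl⟩ := Nat.exists_eq_add_of_le hmn
    calc ∑ l ∈ Finset.Ico m (m + k), ((1 : ℝ) / 2) ^ (l + 3)
        ≤ (1 / 2) ^ (m + 2) - (1 / 2) ^ (m + k + 2) := key k
      _ ≤ (1 / 2) ^ (m + 2) := sub_le_self _ (by positivity)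
  · rw [Finset.Ico_eq_empty (by omega), Finset.sum_empty]
    positivity

end Count
section Cauchy
open Classical
variable {A : Type} [Fintype A] (z b : A) (τ : A → A)

lemma S_card {R l : ℕ} (hsub : blk l ⊆ Finset.Icc (-(R : ℤ)) (R : ℤ)) :
    (Finset.univ.filter
      (fun j : (Finset.Icc (-(R : ℤ)) (R : ℤ) : Finset ℤ) => j.1 ∈ blk l)).card =
      (blk l).card := by
  apply Finset.card_bij (fun j _ => j.1)
  · intro a ha
    simpa using (Finset.mem_filter.1 ha).2
  · intro a ha a' ha' h
    exact Subtype.ext h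
  · intro j hj
    exact ⟨⟨j, hsub hj⟩, by simp [hj], rfl⟩

lemma blk_sub_imp {R l : ℕ} (hsub : blk l ⊆ Finset.Icc (-(R : ℤ)) (R : ℤ)) :
    l + 3 ≤ 2 * R + 1 := by
  have hmem : (Nblk (l + 1) : ℤ) ∈ blk l := by
    simp only [blk, Finset.mem_Ioc]
    exact ⟨by exact_mod_cast Nblk_lt l, le_refl _⟩
  have := Finset.mem_Icc.1 (hsub hmem)
  have hle : (Nblk (l + 1) : ℤ) ≤ (R : ℤ) := this.2
  have h2 : Nblk (l + 1) ≤ R := by exact_mod_cast hle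
  have h3 : l + 3 ≤ Nblk (l + 1) := by
    show l + 3 ≤ Nblk l + (l + 3)
    omega
  omega

lemma Zfilter_card_le (hA : 2 ≤ Fintype.card A) (R l : ℕ) :
    (((Finset.univ : Finset (Word A R)).filter
        (fun w => blk l ⊆ Finset.Icc (-(R : ℤ)) (R : ℤ) ∧
          ∀ j : (Finset.Icc (-(R : ℤ)) (R : ℤ) : Finset ℤ), j.1 ∈ blk l → w j = z)).card : ℝ) ≤
      (Fintype.card A : ℝ) ^ (2 * R + 1) * (1 / 2) ^ (l + 3) := by
  have hk0 : (0 : ℝ) < (Fintype.card A : ℝ) := by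
    have : 0 < Fintype.card A := by omega
    exact_mod_cast this
  by_cases hsub : blk l ⊆ Finset.Icc (-(R : ℤ)) (R : ℤ)
  · set S : Finset ((Finset.Icc (-(R : ℤ)) (R : ℤ) : Finset ℤ) : Type) :=
      Finset.univ.filter (fun j => j.1 ∈ blk l) with hS
    have heq : (Finset.univ : Finset (Word A R)).filter
        (fun w => blk l ⊆ Finset.Icc (-(R : ℤ)) (R : ℤ) ∧
          ∀ j : (Finset.Icc (-(R : ℤ)) (R : ℤ) : Finset ℤ), j.1 ∈ blk l → w j = z) =
        (Finset.univ : Finset (Word A R)).filter (fun w => ∀ j ∈ S, w j = z) := by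
      ext w
      simp only [Finset.mem_filter, Finset.mem_univ, true_and, hS]
      constructor
      · rintro ⟨-, h⟩ j hj
        exact h j (by simpa using hj)
      · intro h
        exact ⟨hsub, fun j hj => h j (by simpa using hj)⟩
    have hcard : ((Finset.univ : Finset (Word A R)).filter (fun w => ∀ j ∈ S, w j = z)).card =
        Fintype.card A ^ (Fintype.card ((Finset.Icc (-(R : ℤ)) (R : ℤ) : Finset ℤ) : Type)
          - S.card) := card_forced z S
    have hScard : S.card = l + 3 := by rw [hS, S_card hsub, blk_card]
    have hDcard : Fintype.card ((Finset.Icc (-(R : ℤ)) (R : ℤ) : Finset ℤ) : Type) = 2 * R + 1 := by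
      rw [Fintype.card_coe, card_Icc_window]
    rw [heq, hcard, hScard, hDcard]
    have hle : l + 3 ≤ 2 * R + 1 := blk_sub_imp hsub
    have hpow : (Fintype.card A : ℝ) ^ (2 * R + 1 - (l + 3)) * (Fintype.card A : ℝ) ^ (l + 3) =
        (Fintype.card A : ℝ) ^ (2 * R + 1) := by
      rw [← pow_add, Nat.sub_add_cancel hle]
    have h2pow : (2 : ℝ) ^ (l + 3) ≤ (Fintype.card A : ℝ) ^ (l + 3) := by
      apply pow_le_pow_left₀ (by norm_num)
      exact_mod_cast hA
    rw [Nat.cast_pow]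
    rw [show ((1 : ℝ) / 2) ^ (l + 3) = 1 / 2 ^ (l + 3) by rw [div_pow, one_pow]]
    rw [mul_one_div]
    rw [le_div_iff₀ (by positivity)]
    calc (Fintype.card A : ℝ) ^ (2 * R + 1 - (l + 3)) * 2 ^ (l + 3)
        ≤ (Fintype.card A : ℝ) ^ (2 * R + 1 - (l + 3)) * (Fintype.card A : ℝ) ^ (l + 3) := by
          apply mul_le_mul_of_nonneg_left h2pow (by positivity)
      _ = (Fintype.card A : ℝ) ^ (2 * R + 1) := hpow
  · rw [Finset.filter_eq_empty_iff.2 (fun w _ h => hsub h.1)]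
    simp only [Finset.card_empty, Nat.cast_zero]
    positivity

lemma exists_block_of_ne {m n : ℕ} (hmn : m ≤ n) {x : ℤ → A}
    (h : csSeq z τ m x 0 ≠ csSeq z τ n x 0) :
    ∃ l, m ≤ l ∧ l < n ∧ ∀ j ∈ blk l, x j = z := by
  by_contra hno
  push_neg at hno
  apply h
  rw [csSeq_apply_zero, csSeq_apply_zero]
  have : zcount z m x = zcount z n x := by
    unfold zcount
    congr 1
    ext l
    simp only [Finset.mem_filter, Finset.mem_range]
    constructor
    · rintro ⟨hl, hall⟩
      exact ⟨hl.trans_le hmn, hall⟩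
    · rintro ⟨hl, hall⟩
      refine ⟨?_, hall⟩
      by_contra hlm
      push_neg at hlm
      obtain ⟨j, hj, hjne⟩ := hno l hlm hl
      exact hjne (hall j hj)
  rw [this]

lemma deltaR_cauchy (hbz : b ≠ z) (hA : 2 ≤ Fintype.card A) {m n R : ℕ} (hmn : m ≤ n)
    (hm : HasRadius R (csSeq z τ m)) (hn : HasRadius R (csSeq z τ n)) :
    deltaR R (csSeq z τ m) (csSeq z τ n) ≤ (1 / 2 : ℝ) ^ (m + 2) := by
  classical
  set B : Finset (Word A R) := (Finset.Ico m n).biUnion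
    (fun l => (Finset.univ : Finset (Word A R)).filter
      (fun w => blk l ⊆ Finset.Icc (-(R : ℤ)) (R : ℤ) ∧
        ∀ j : (Finset.Icc (-(R : ℤ)) (R : ℤ) : Finset ℤ), j.1 ∈ blk l → w j = z)) with hB
  have hsub : diffSet R (csSeq z τ m) (csSeq z τ n) ⊆ ↑B := by
    intro w hw
    rw [mem_diffSet_iff b hm hn w] at hw
    obtain ⟨l, hml, hln, hall⟩ := exists_block_of_ne z τ hmn hw
    have hsubl : blk l ⊆ Finset.Icc (-(R : ℤ)) (R : ℤ) := by
      intro j hj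
      by_contra hjD
      have := hall j hj
      rw [pad_not_mem b w hjD] at this
      exact hbz this
    simp only [hB, Finset.coe_biUnion, Set.mem_iUnion, Finset.mem_coe, Finset.mem_Ico]
    refine ⟨l, ⟨hml, hln⟩, ?_⟩
    simp only [Finset.mem_filter, Finset.mem_univ, true_and]
    refine ⟨hsubl, fun j hj => ?_⟩
    have := hall j.1 hj
    rwa [pad_mem b w j.2] at this
  have h1 : ((diffSet R (csSeq z τ m) (csSeq z τ n)).ncard : ℝ) ≤ (B.card : ℝ) := by
    have := Set.ncard_le_ncard hsub (Set.toFinite _)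
    rw [Set.ncard_coe_finset] at this
    exact_mod_cast this
  have h2 : (B.card : ℝ) ≤ ∑ l ∈ Finset.Ico m n,
      (((Finset.univ : Finset (Word A R)).filter
        (fun w => blk l ⊆ Finset.Icc (-(R : ℤ)) (R : ℤ) ∧
          ∀ j : (Finset.Icc (-(R : ℤ)) (R : ℤ) : Finset ℤ), j.1 ∈ blk l → w j = z)).card : ℝ) := by
    rw [hB]
    exact_mod_cast Finset.card_biUnion_le
  have h3 : (B.card : ℝ) ≤
      (Fintype.card A : ℝ) ^ (2 * R + 1) * ∑ l ∈ Finset.Ico m n, ((1 : ℝ) / 2) ^ (l + 3) := by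
    refine h2.trans ?_
    rw [Finset.mul_sum]
    exact Finset.sum_le_sum (fun l _ => Zfilter_card_le z hA R l)
  have hk0 : (0 : ℝ) < (Fintype.card A : ℝ) ^ (2 * R + 1) := by
    have : 0 < Fintype.card A := by omega
    positivity
  unfold deltaR
  rw [div_le_iff₀ hk0]
  calc ((diffSet R (csSeq z τ m) (csSeq z τ n)).ncard : ℝ)
      ≤ (B.card : ℝ) := h1
    _ ≤ (Fintype.card A : ℝ) ^ (2 * R + 1) * ∑ l ∈ Finset.Ico m n, ((1 : ℝ) / 2) ^ (l + 3) := h3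
    _ ≤ (Fintype.card A : ℝ) ^ (2 * R + 1) * (1 / 2) ^ (m + 2) := by
        apply mul_le_mul_of_nonneg_left (geom_tail_le m n) (le_of_lt hk0)
    _ = (1 / 2) ^ (m + 2) * (Fintype.card A : ℝ) ^ (2 * R + 1) := by ring

end Cauchy
section Lower1
open Classical
variable {A : Type} [Fintype A] (z b : A) (τ : A → A)

lemma blk_sub_D {l i R : ℕ} (hli : l < i) (hNR : Nblk i ≤ R) :
    blk l ⊆ Finset.Icc (-(R : ℤ)) (R : ℤ) := by
  intro j hj
  have h1 : 0 < j := blk_pos hj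
  have h2 : j ≤ (Nblk i : ℤ) := blk_le hj hli
  have h3 : (Nblk i : ℤ) ≤ (R : ℤ) := by exact_mod_cast hNR
  rw [Finset.mem_Icc]
  omega

lemma T_card {R : ℕ} {T : Finset ℤ} (hsub : T ⊆ Finset.Icc (-(R : ℤ)) (R : ℤ)) :
    (Finset.univ.filter
      (fun j : (Finset.Icc (-(R : ℤ)) (R : ℤ) : Finset ℤ) => j.1 ∈ T)).card = T.card := by
  apply Finset.card_bij (fun j _ => j.1)
  · intro a ha
    simpa using (Finset.mem_filter.1 ha).2
  · intro a ha a' ha' h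
    exact Subtype.ext h
  · intro j hj
    exact ⟨⟨j, hsub hj⟩, by simp [hj], rfl⟩

lemma forced_card {R : ℕ} {T : Finset ℤ} (hsub : T ⊆ Finset.Icc (-(R : ℤ)) (R : ℤ)) :
    ((Finset.univ : Finset (Word A R)).filter
        (fun w => ∀ j : (Finset.Icc (-(R : ℤ)) (R : ℤ) : Finset ℤ), j.1 ∈ T → w j = z)).card =
      Fintype.card A ^ (2 * R + 1 - T.card) := by
  set S : Finset ((Finset.Icc (-(R : ℤ)) (R : ℤ) : Finset ℤ) : Type) :=
    Finset.univ.filter (fun j => j.1 ∈ T) with hS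
  have heq : (Finset.univ : Finset (Word A R)).filter
      (fun w => ∀ j : (Finset.Icc (-(R : ℤ)) (R : ℤ) : Finset ℤ), j.1 ∈ T → w j = z) =
      (Finset.univ : Finset (Word A R)).filter (fun w => ∀ j ∈ S, w j = z) := by
    ext w
    simp [hS]
  have hcard : ((Finset.univ : Finset (Word A R)).filter (fun w => ∀ j ∈ S, w j = z)).card =
      Fintype.card A ^ (Fintype.card ((Finset.Icc (-(R : ℤ)) (R : ℤ) : Finset ℤ) : Type)
        - S.card) := card_forced z S
  have hDcard : Fintype.card ((Finset.Icc (-(R : ℤ)) (R : ℤ) : Finset ℤ) : Type) = 2 * R + 1 := by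
    rw [Fintype.card_coe, card_Icc_window]
  rw [heq, hcard, hDcard, hS, T_card hsub]

lemma T_card_le {R : ℕ} {T : Finset ℤ} (hsub : T ⊆ Finset.Icc (-(R : ℤ)) (R : ℤ)) :
    T.card ≤ 2 * R + 1 := by
  have := Finset.card_le_card hsub
  rwa [card_Icc_window] at this

end Lower1
section Lower2
open Classical
variable {A : Type} [Fintype A] (z b : A) (τ : A → A)

lemma deltaR_lower (hbz : b ≠ z) (hτ : ∀ a, τ a ≠ a) (hA : 2 ≤ Fintype.card A)
    {c : (ℤ → A) → (ℤ → A)} {r i₀ i R : ℕ}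
    (hc : HasRadius r c) (hri : r ≤ Nblk i₀) (hi : i₀ + 1 ≤ i)
    (hcs : HasRadius R (csSeq z τ i)) (hcR : HasRadius R c) (hNR : Nblk i ≤ R) :
    (1 / 2 : ℝ) * (1 / (Fintype.card A : ℝ)) ^ (i₀ + 3) ≤ deltaR R (csSeq z τ i) c := by
  have hk2 : (2 : ℝ) ≤ (Fintype.card A : ℝ) := by exact_mod_cast hA
  have hk0 : (0 : ℝ) < (Fintype.card A : ℝ) := by linarith
  have hi₀i : i₀ < i := hi
  have hsub₀ : blk i₀ ⊆ Finset.Icc (-(R : ℤ)) (R : ℤ) := blk_sub_D hi₀i hNR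
  set NI : ℤ := (Nblk (i₀ + 1) : ℤ) with hNI
  have hNImem : NI ∈ blk i₀ := by
    have h1 : (Nblk i₀ : ℤ) < (Nblk (i₀ + 1) : ℤ) := by exact_mod_cast Nblk_lt i₀
    rw [hNI]
    simp only [blk, Finset.mem_Ioc]
    exact ⟨h1, le_refl _⟩
  have hNID : NI ∈ Finset.Icc (-(R : ℤ)) (R : ℤ) := hsub₀ hNImem
  have hNIpos : 0 < NI := blk_pos hNImem
  have hNIr : (r : ℤ) < NI := by
    have h1 : (Nblk i₀ : ℤ) < NI := by rw [hNI]; exact_mod_cast Nblk_lt i₀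
    have h2 : (r : ℤ) ≤ (Nblk i₀ : ℤ) := by exact_mod_cast hri
    omega
  set G₀ : Finset (Word A R) := Finset.univ.filter
    (fun w => ∀ j : (Finset.Icc (-(R : ℤ)) (R : ℤ) : Finset ℤ), j.1 ∈ blk i₀ → w j = z) with hG₀def
  set p : Word A R → Prop := fun w =>
    ∀ l, i₀ + 1 ≤ l → l < i → ∃ j : (Finset.Icc (-(R : ℤ)) (R : ℤ) : Finset ℤ),
      j.1 ∈ blk l ∧ w j ≠ z with hpdef
  set G' : Finset (Word A R) := G₀.filter p with hG'def
  set mod : Word A R → Word A R := fun w j => if j.1 = NI then b else w j with hmoddef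
  -- pad values
  have hpad_ne : ∀ (w : Word A R) (j : ℤ), j ≠ NI → pad b R w j = pad b R (mod w) j := by
    intro w j hj
    by_cases hD : j ∈ Finset.Icc (-(R : ℤ)) (R : ℤ)
    · rw [pad_mem b w hD, pad_mem b (mod w) hD]
      simp only [hmoddef]
      rw [if_neg hj]
    · rw [pad_not_mem b w hD, pad_not_mem b (mod w) hD]
  have hwz : ∀ w ∈ G₀, ∀ j : (Finset.Icc (-(R : ℤ)) (R : ℤ) : Finset ℤ),
      j.1 ∈ blk i₀ → w j = z := by
    intro w hw
    exact (Finset.mem_filter.1 hw).2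
  have hcount : ∀ w ∈ G₀, zcount z i (pad b R w) = zcount z i (pad b R (mod w)) + 1 := by
    intro w hw
    apply zcount_modify z hi₀i
    · intro j hj
      exact hpad_ne w j (fun he => hj (he ▸ hNImem))
    · intro j hj
      rw [pad_mem b w (hsub₀ hj)]
      exact hwz w hw ⟨j, hsub₀ hj⟩ hj
    · refine ⟨NI, hNImem, ?_⟩
      rw [pad_mem b (mod w) hNID]
      simpa [hmoddef] using hbz
  have hcs_ne : ∀ w ∈ G₀, csSeq z τ i (pad b R w) 0 = τ (csSeq z τ i (pad b R (mod w)) 0) := by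
    intro w hw
    have h0 : pad b R w 0 = pad b R (mod w) 0 := hpad_ne w 0 (ne_of_lt hNIpos)
    rw [csSeq_apply_zero, csSeq_apply_zero, hcount w hw, Function.iterate_succ_apply', h0]
  have hc_eq : ∀ w : Word A R, c (pad b R w) 0 = c (pad b R (mod w)) 0 := by
    intro w
    apply eval_eq_of_hasRadius hc
    intro j hj
    apply hpad_ne w j
    intro he
    rw [he, abs_of_pos hNIpos] at hj
    exact absurd hj (not_le.2 hNIr)
  set g : Word A R → Word A R := fun w =>
    if c (pad b R w) 0 = csSeq z τ i (pad b R w) 0 then mod w else w with hgdef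
  have himg : ∀ w ∈ G', g w ∈ diffSet R (csSeq z τ i) c := by
    intro w hw
    have hw₀ : w ∈ G₀ := Finset.mem_filter.1 hw |>.1
    rw [mem_diffSet_iff b hcs hcR]
    by_cases h : c (pad b R w) 0 = csSeq z τ i (pad b R w) 0
    · simp only [hgdef]
      rw [if_pos h]
      intro heq
      have h1 : c (pad b R (mod w)) 0 = τ (csSeq z τ i (pad b R (mod w)) 0) := by
        rw [← hc_eq w, h, hcs_ne w hw₀]
      rw [← heq] at h1
      exact hτ _ h1.symm
    · simp only [hgdef]
      rw [if_neg h]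
      exact fun he => h he.symm
  have hvalz : ∀ w ∈ G₀, w ⟨NI, hNID⟩ = z := fun w hw => hwz w hw ⟨NI, hNID⟩ hNImem
  have hvalb : ∀ w : Word A R, mod w ⟨NI, hNID⟩ = b := by
    intro w
    simp [hmoddef]
  have hmod_inj : ∀ w ∈ G₀, ∀ w' ∈ G₀, mod w = mod w' → w = w' := by
    intro w hw w' hw' h
    funext j
    by_cases hj : j.1 = NI
    · have hjeq : j = ⟨NI, hNID⟩ := Subtype.ext hj
      rw [hjeq, hvalz w hw, hvalz w' hw']
    · have h1 : mod w j = mod w' j := by rw [h]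
      simp only [hmoddef] at h1
      rwa [if_neg hj, if_neg hj] at h1
  have hinj : Set.InjOn g ↑G' := by
    intro w hw w' hw' hgww
    have hw₀ : w ∈ G₀ := Finset.mem_filter.1 hw |>.1
    have hw₀' : w' ∈ G₀ := Finset.mem_filter.1 hw' |>.1
    simp only [hgdef] at hgww
    by_cases h1 : c (pad b R w) 0 = csSeq z τ i (pad b R w) 0 <;>
      by_cases h2 : c (pad b R w') 0 = csSeq z τ i (pad b R w') 0
    · rw [if_pos h1, if_pos h2] at hgww
      exact hmod_inj w hw₀ w' hw₀' hgww
    · rw [if_pos h1, if_neg h2] at hgww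
      exfalso
      have := hvalb w
      rw [hgww] at this
      rw [hvalz w' hw₀'] at this
      exact hbz this.symm
    · rw [if_neg h1, if_pos h2] at hgww
      exfalso
      have := hvalb w'
      rw [← hgww] at this
      rw [hvalz w hw₀] at this
      exact hbz this.symm
    · rwa [if_neg h1, if_neg h2] at hgww
  have hcard_im : (G'.card : ℝ) ≤ ((diffSet R (csSeq z τ i) c).ncard : ℝ) := by
    have hsubim : ↑(G'.image g) ⊆ diffSet R (csSeq z τ i) c := by
      intro v hv
      obtain ⟨w, hw, rfl⟩ := Finset.mem_image.1 (Finset.mem_coe.1 hv)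
      exact himg w hw
    have h1 := Set.ncard_le_ncard hsubim (Set.toFinite _)
    rw [Set.ncard_coe_finset, Finset.card_image_of_injOn hinj] at h1
    exact_mod_cast h1
  -- cardinality of G₀
  have hG₀card : G₀.card = Fintype.card A ^ (2 * R + 1 - (i₀ + 3)) := by
    have := forced_card z hsub₀
    rw [blk_card] at this
    exact this
  -- bad set
  set Bad : Finset (Word A R) := G₀.filter (fun w => ¬ p w) with hBaddef
  have hsplit : G'.card + Bad.card = G₀.card := by
    rw [hG'def, hBaddef]
    exact Finset.card_filter_add_card_filter_not (p := p)
  have hBadcard : (Bad.card : ℝ) ≤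
      (Fintype.card A : ℝ) ^ (2 * R + 1 - (i₀ + 3)) *
        ∑ l ∈ Finset.Ico (i₀ + 1) i, ((1 : ℝ) / 2) ^ (l + 3) := by
    have hBsub : Bad ⊆ (Finset.Ico (i₀ + 1) i).biUnion (fun l =>
        Finset.univ.filter (fun w : Word A R =>
          ∀ j : (Finset.Icc (-(R : ℤ)) (R : ℤ) : Finset ℤ), j.1 ∈ blk i₀ ∪ blk l → w j = z)) := by
      intro w hw
      obtain ⟨hw₀, hnp⟩ := Finset.mem_filter.1 hw
      have hwz' := hwz w hw₀
      simp only [hpdef, not_forall] at hnp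
      obtain ⟨l, hl1, hl2, hl3⟩ := hnp
      push_neg at hl3
      rw [Finset.mem_biUnion]
      refine ⟨l, Finset.mem_Ico.2 ⟨hl1, hl2⟩, ?_⟩
      rw [Finset.mem_filter]
      refine ⟨Finset.mem_univ _, fun j hj => ?_⟩
      rcases Finset.mem_union.1 hj with hj' | hj'
      · exact hwz' j hj'
      · exact hl3 j hj'
    have hstep := Finset.card_biUnion_le (s := Finset.Ico (i₀ + 1) i) (t := fun l =>
      Finset.univ.filter (fun w : Word A R =>
        ∀ j : (Finset.Icc (-(R : ℤ)) (R : ℤ) : Finset ℤ), j.1 ∈ blk i₀ ∪ blk l → w j = z))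
    have hB1 : (Bad.card : ℝ) ≤ ∑ l ∈ Finset.Ico (i₀ + 1) i,
        ((Finset.univ.filter (fun w : Word A R =>
          ∀ j : (Finset.Icc (-(R : ℤ)) (R : ℤ) : Finset ℤ),
            j.1 ∈ blk i₀ ∪ blk l → w j = z)).card : ℝ) := by
      exact_mod_cast (Finset.card_le_card hBsub).trans hstep
    refine hB1.trans ?_
    rw [Finset.mul_sum]
    apply Finset.sum_le_sum
    intro l hl
    obtain ⟨hl1, hl2⟩ := Finset.mem_Ico.1 hl
    have hsubl : blk l ⊆ Finset.Icc (-(R : ℤ)) (R : ℤ) := blk_sub_D hl2 hNR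
    have hdisj : Disjoint (blk i₀) (blk l) := by
      rw [Finset.disjoint_left]
      intro j hj hj'
      have heq := blk_disjoint hj hj'
      exact Nat.not_succ_le_self i₀ (hl1.trans_eq heq.symm)
    have hU : blk i₀ ∪ blk l ⊆ Finset.Icc (-(R : ℤ)) (R : ℤ) := Finset.union_subset hsub₀ hsubl
    have hUcard : (blk i₀ ∪ blk l).card = (i₀ + 3) + (l + 3) := by
      rw [Finset.card_union_of_disjoint hdisj, blk_card, blk_card]
    have hfc := forced_card z hU
    rw [hUcard] at hfc
    rw [hfc]
    have hab : (i₀ + 3) + (l + 3) ≤ 2 * R + 1 := by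
      have := T_card_le hU
      rwa [hUcard] at this
    have hpow : (Fintype.card A : ℝ) ^ (2 * R + 1 - ((i₀ + 3) + (l + 3))) *
        (Fintype.card A : ℝ) ^ (l + 3) = (Fintype.card A : ℝ) ^ (2 * R + 1 - (i₀ + 3)) := by
      rw [← pow_add]
      congr 1
      rw [← Nat.sub_sub]
      exact Nat.sub_add_cancel (Nat.le_sub_of_add_le (by rwa [Nat.add_comm] at hab))
    have h2pow : (2 : ℝ) ^ (l + 3) ≤ (Fintype.card A : ℝ) ^ (l + 3) :=
      pow_le_pow_left₀ (by norm_num) hk2 _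
    rw [Nat.cast_pow]
    rw [show ((1 : ℝ) / 2) ^ (l + 3) = 1 / 2 ^ (l + 3) by rw [div_pow, one_pow]]
    rw [mul_one_div, le_div_iff₀ (by positivity)]
    calc (Fintype.card A : ℝ) ^ (2 * R + 1 - ((i₀ + 3) + (l + 3))) * 2 ^ (l + 3)
        ≤ (Fintype.card A : ℝ) ^ (2 * R + 1 - ((i₀ + 3) + (l + 3))) *
          (Fintype.card A : ℝ) ^ (l + 3) := by
          exact mul_le_mul_of_nonneg_left h2pow (by positivity)
      _ = _ := hpow
  have hgeom : ∑ l ∈ Finset.Ico (i₀ + 1) i, ((1 : ℝ) / 2) ^ (l + 3) ≤ 1 / 2 := by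
    refine (geom_tail_le (i₀ + 1) i).trans ?_
    calc ((1 : ℝ) / 2) ^ (i₀ + 1 + 2) ≤ (1 / 2) ^ 1 := by
          apply pow_le_pow_of_le_one (by norm_num) (by norm_num)
          omega
      _ = 1 / 2 := pow_one _
  -- conclude
  set K : ℝ := (Fintype.card A : ℝ) ^ (2 * R + 1 - (i₀ + 3)) with hK
  have hG'real : K / 2 ≤ (G'.card : ℝ) := by
    have h1 : (G'.card : ℝ) = (G₀.card : ℝ) - (Bad.card : ℝ) := by
      have := hsplit
      push_cast [← this]
      ring
    have h2 : (G₀.card : ℝ) = K := by rw [hG₀card, hK]; push_cast; ring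
    have h3 : (Bad.card : ℝ) ≤ K * (1 / 2) := by
      refine hBadcard.trans ?_
      exact mul_le_mul_of_nonneg_left hgeom (by rw [hK]; positivity)
    rw [h1, h2]
    linarith
  have hi₀R : i₀ + 3 ≤ 2 * R + 1 := blk_sub_imp hsub₀
  have hKdiv : K * (Fintype.card A : ℝ) ^ (i₀ + 3) = (Fintype.card A : ℝ) ^ (2 * R + 1) := by
    rw [hK, ← pow_add]
    congr 1
    omega
  have hkpow0 : (0 : ℝ) < (Fintype.card A : ℝ) ^ (2 * R + 1) := by positivity
  unfold deltaR
  rw [le_div_iff₀ hkpow0]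
  have hlhs : (1 / 2 : ℝ) * (1 / (Fintype.card A : ℝ)) ^ (i₀ + 3) *
      (Fintype.card A : ℝ) ^ (2 * R + 1) = K / 2 := by
    rw [← hKdiv]
    field_simp
    have hne : (Fintype.card A : ℝ) ≠ 0 := hk0.ne'
    rw [mul_right_comm, ← mul_pow, one_div, inv_mul_cancel₀ hne, one_pow, one_mul]
  rw [hlhs]
  exact hG'real.trans hcard_im

end Lower2
section Assemble
open Classical Filter
variable {A : Type} [Fintype A]

lemma diffSet_comm (r : ℕ) (c d : (ℤ → A) → (ℤ → A)) : diffSet r c d = diffSet r d c := by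
  ext w
  exact ⟨fun ⟨x, h1, h2⟩ => ⟨x, h1, h2.symm⟩, fun ⟨x, h1, h2⟩ => ⟨x, h1, h2.symm⟩⟩

lemma delta_comm (c d : (ℤ → A) → (ℤ → A)) : delta c d = delta d c := by
  unfold delta deltaR
  rw [max_comm, diffSet_comm]

lemma delta_csSeq_le (z b : A) (τ : A → A) (hbz : b ≠ z) (hA : 2 ≤ Fintype.card A)
    {m n : ℕ} (hmn : m ≤ n) :
    delta (csSeq z τ m) (csSeq z τ n) ≤ (1 / 2 : ℝ) ^ (m + 2) := by
  apply deltaR_cauchy z b τ hbz hA hmn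
  · exact hasRadius_mono (hasRadius_rad (isCA_csSeq z τ m)) (le_max_left _ _)
  · exact hasRadius_mono (hasRadius_rad (isCA_csSeq z τ n)) (le_max_right _ _)

end Assemble

/-- the uniform Bernoulli space of cellular automata is not complete:
there is a Cauchy sequence of cellular automata with no cellular automaton as limit. -/
theorem stmt9 {A : Type} [Fintype A] (hA : 2 ≤ Fintype.card A) :
    ∃ cs : ℕ → (ℤ → A) → (ℤ → A), (∀ i, IsCA (cs i)) ∧
      (∀ ε : ℝ, 0 < ε → ∃ N : ℕ, ∀ m n : ℕ, N ≤ m → N ≤ n →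
        delta (cs m) (cs n) < ε) ∧
      ¬ ∃ c, IsCA c ∧ Tendsto (fun i => delta (cs i) c) atTop (nhds 0) := by
  classical
  obtain ⟨z, b, hzb⟩ := Fintype.exists_pair_of_one_lt_card (α := A) (by omega)
  have hbz : b ≠ z := hzb.symm
  set τ : A → A := fun a => if a = z then b else z with hτdef
  have hτ : ∀ a, τ a ≠ a := by
    intro a
    by_cases ha : a = z
    · subst ha
      simp only [hτdef, if_pos rfl]
      exact hbz
    · simp only [hτdef, if_neg ha]
      exact fun h => ha h.symm
  refine ⟨csSeq z τ, isCA_csSeq z τ, ?_, ?_⟩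
  · -- Cauchy
    intro ε hε
    obtain ⟨N, hN⟩ := exists_pow_lt_of_lt_one hε (by norm_num : (1 / 2 : ℝ) < 1)
    refine ⟨N, fun m n hm hn => ?_⟩
    have key : ∀ m' n' : ℕ, N ≤ m' → m' ≤ n' →
        delta (csSeq z τ m') (csSeq z τ n') < ε := by
      intro m' n' hm' hmn
      have h1 := delta_csSeq_le z b τ hbz hA hmn
      have h2 : ((1 : ℝ) / 2) ^ (m' + 2) ≤ (1 / 2) ^ N := by
        apply pow_le_pow_of_le_one (by norm_num) (by norm_num)
        omega
      linarith
    rcases le_total m n with hmn | hnm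
    · exact key m n hm hmn
    · rw [delta_comm]
      exact key n m hn hnm
  · -- no CA limit
    rintro ⟨c, hCA, hlim⟩
    have hc : HasRadius (rad c) c := hasRadius_rad hCA
    set i₀ : ℕ := rad c with hi₀def
    have hri : rad c ≤ Nblk i₀ := le_Nblk i₀
    have hε₀ : (0 : ℝ) < (1 / 2) * (1 / (Fintype.card A : ℝ)) ^ (i₀ + 3) := by
      have : 0 < Fintype.card A := by omega
      have : (0 : ℝ) < (Fintype.card A : ℝ) := by exact_mod_cast this
      positivity
    have hev := hlim (Iio_mem_nhds hε₀)
    rw [Filter.mem_map, Filter.mem_atTop_sets] at hev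
    obtain ⟨M, hM⟩ := hev
    set i : ℕ := max M (i₀ + 1) with hidef
    have hiM : M ≤ i := le_max_left _ _
    have hii₀ : i₀ + 1 ≤ i := le_max_right _ _
    have hsmall : delta (csSeq z τ i) c < (1 / 2) * (1 / (Fintype.card A : ℝ)) ^ (i₀ + 3) :=
      hM i hiM
    have hbig : (1 / 2 : ℝ) * (1 / (Fintype.card A : ℝ)) ^ (i₀ + 3) ≤ delta (csSeq z τ i) c := by
      apply deltaR_lower z b τ hbz hτ hA hc hri hii₀
      · exact hasRadius_mono (hasRadius_rad (isCA_csSeq z τ i)) (le_max_left _ _)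
      · exact hasRadius_mono hc (le_max_right _ _)
      · exact le_trans (nblk_le_rad z b τ hbz hτ (by omega)) (le_max_left _ _)
    linarith
end

section
/- If μ and ν are distinct Borel probability measures on Σ^ℤ with ν shift-invariant and μ ergodic (shift-invariant with all shift-invariant sets of measure 0 or 1), then the pseudometrics δ^μ and δ^ν induce distinct topologies on the set of cellular automata: there exists a sequence (cᵢ) of cellular automata with δ^μ(cᵢ, id) → 0 but δ^ν(cᵢ, id) not converging to 0. -/
open MeasureTheory Filter Function

section AuxProof

open MeasureTheory Set

variable {A : Type}

/-- A fixed-point-free map on a finite type with at least two elements. -/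
lemma exists_fpf [Fintype A] (hA : 2 ≤ Fintype.card A) : ∃ τ : A → A, ∀ a, τ a ≠ a := by
  classical
  let e := Fintype.equivFin A
  have hn : 0 < Fintype.card A := by omega
  refine ⟨fun a => e.symm ⟨((e a : ℕ) + 1) % Fintype.card A, Nat.mod_lt _ hn⟩, fun a h => ?_⟩
  apply_fun e at h
  rw [Equiv.apply_symm_apply] at h
  have hv : ((e a : ℕ) + 1) % Fintype.card A = (e a : ℕ) := congrArg Fin.val h
  have hlt : (e a : ℕ) < Fintype.card A := (e a).2
  rcases lt_or_ge ((e a : ℕ) + 1) (Fintype.card A) with hc | hc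
  · rw [Nat.mod_eq_of_lt hc] at hv; omega
  · have hceq : (e a : ℕ) + 1 = Fintype.card A := by omega
    rw [hceq, Nat.mod_self] at hv
    omega

lemma measurable_shift [MeasurableSpace A] : Measurable (shift (A := A)) :=
  measurable_pi_lambda _ fun i => measurable_pi_apply _

/-- The shift as a measurable equivalence. -/
def shiftME [MeasurableSpace A] : (ℤ → A) ≃ᵐ (ℤ → A) where
  toFun := shift
  invFun := fun x i => x (i - 1)
  left_inv := fun x => funext fun i => by simp [shift]
  right_inv := fun x => funext fun i => by simp [shift]
  measurable_toFun := measurable_shift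
  measurable_invFun := measurable_pi_lambda _ fun i => measurable_pi_apply _

lemma map_shift_eq [MeasurableSpace A] {μ : Measure (ℤ → A)} (h : ShiftInvariant μ) :
    μ.map shift = μ :=
  Measure.ext fun s hs => by
    rw [Measure.map_apply measurable_shift hs]; exact h s hs

lemma ergodic_shift [MeasurableSpace A] (μ : Measure (ℤ → A)) [IsProbabilityMeasure μ]
    (hμ : ShiftInvariant μ)
    (herg : ∀ B : Set (ℤ → A), MeasurableSet B → shift ⁻¹' B = B → μ B = 0 ∨ μ B = 1) :
    Ergodic shift μ := by
  refine ⟨⟨measurable_shift, map_shift_eq hμ⟩, ⟨fun s hs hinv => ?_⟩⟩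
  rw [Filter.eventuallyConst_set']
  rcases herg s hs hinv with h0 | h1
  · left; rwa [ae_eq_empty]
  · right; rw [ae_eq_univ]; rwa [prob_compl_eq_zero_iff hs]

/-- If `μ` is ergodic, `ν` shift-invariant and `μ ≠ ν`, there is a measurable set which is
`μ`-null but has positive `ν`-measure. -/
lemma exists_null_pos [MeasurableSpace A] (μ ν : Measure (ℤ → A))
    [IsProbabilityMeasure μ] [IsProbabilityMeasure ν]
    (hne : μ ≠ ν) (hν : ShiftInvariant ν) (hμ : ShiftInvariant μ)
    (herg : ∀ B : Set (ℤ → A), MeasurableSet B → shift ⁻¹' B = B → μ B = 0 ∨ μ B = 1) :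
    ∃ B : Set (ℤ → A), MeasurableSet B ∧ μ B = 0 ∧ 0 < ν B := by
  by_contra hcon
  push_neg at hcon
  have hac : ν ≪ μ := by
    intro s hs
    have hB := hcon (toMeasurable μ s) (measurableSet_toMeasurable μ s)
      (by rwa [measure_toMeasurable])
    exact le_antisymm (le_trans (measure_mono (subset_toMeasurable μ s)) hB) zero_le
  have herg' : Ergodic shift μ := ergodic_shift μ hμ herg
  have hemb : MeasurableEmbedding (shift (A := A)) := (shiftME (A := A)).measurableEmbedding
  have hinv : (fun x => ν.rnDeriv μ (shift x)) =ᵐ[μ] ν.rnDeriv μ := by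
    have h := hemb.rnDeriv_map ν μ
    rwa [map_shift_eq hν, map_shift_eq hμ] at h
  obtain ⟨c, hc⟩ := herg'.ae_eq_const_of_ae_eq_comp₀
    (Measure.measurable_rnDeriv ν μ).nullMeasurable hinv
  have hν_eq : μ.withDensity (ν.rnDeriv μ) = ν := Measure.withDensity_rnDeriv_eq ν μ hac
  have hconst : μ.withDensity (ν.rnDeriv μ) = c • μ := by
    rw [withDensity_congr_ae hc]; exact withDensity_const c
  have hsmul : ν = c • μ := by rw [← hν_eq, hconst]
  have hc1 : c = 1 := by
    have := congrArg (fun m : Measure (ℤ → A) => m Set.univ) hsmul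
    simpa [Measure.smul_apply, measure_univ] using this.symm
  rw [hc1, one_smul] at hsmul
  exact hne hsmul.symm

/-- From a measurable cylinder, build a CA whose difference set with `id` is that cylinder. -/
lemma ca_of_cylinder [MeasurableSpace A] (τ : A → A) (hτ : ∀ a, τ a ≠ a)
    (t : Set (ℤ → A)) (ht : t ∈ MeasureTheory.measurableCylinders fun _ : ℤ => A) :
    ∃ c : (ℤ → A) → (ℤ → A), IsCA c ∧ {x : ℤ → A | c x 0 ≠ x 0} = t := by
  classical
  obtain ⟨s, S, hS, rfl⟩ := (MeasureTheory.mem_measurableCylinders t).1 ht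
  set r : ℕ := s.sup fun i => i.natAbs with hr
  have hdet : ∀ x y : ℤ → A, (∀ j : ℤ, |j| ≤ (r : ℤ) → x j = y j) →
      (x ∈ MeasureTheory.cylinder s S ↔ y ∈ MeasureTheory.cylinder s S) := by
    intro x y hxy
    have hres : s.restrict x = s.restrict y := by
      funext i
      refine hxy i ?_
      rw [Int.abs_eq_natAbs]
      exact_mod_cast Finset.le_sup (f := fun i : ℤ => i.natAbs) i.2
    rw [MeasureTheory.mem_cylinder, MeasureTheory.mem_cylinder, hres]
  refine ⟨fun x i => (fun y : ℤ → A => if y ∈ MeasureTheory.cylinder s S then τ (y 0) else y 0)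
      (fun j => x (i + j)), ⟨r, ?_⟩, ?_⟩
  · refine ⟨fun y : ℤ → A => if y ∈ MeasureTheory.cylinder s S then τ (y 0) else y 0,
      fun x y hxy => ?_, fun x i => rfl⟩
    have h0 : x 0 = y 0 := hxy 0 (by simp)
    show (if x ∈ MeasureTheory.cylinder s S then τ (x 0) else x 0)
        = (if y ∈ MeasureTheory.cylinder s S then τ (y 0) else y 0)
    rw [h0, if_congr (hdet x y hxy) rfl rfl]
  · ext x
    have hx : (fun j : ℤ => x (0 + j)) = x := funext fun j => by rw [zero_add]
    simp only [Set.mem_setOf_eq, hx]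
    by_cases hxC : x ∈ MeasureTheory.cylinder s S <;> simp [hxC, hτ (x 0)]

end AuxProof


/-- if `μ ≠ ν`, `ν` is shift-invariant and `μ` is ergodic, then `δ^μ`
and `δ^ν` induce distinct topologies: some sequence of CA converges to the identity in
`δ^μ` but not in `δ^ν`. -/
theorem stmt13 {A : Type} [Fintype A] [MeasurableSpace A] (hA : 2 ≤ Fintype.card A)
    (μ ν : Measure (ℤ → A)) [IsProbabilityMeasure μ] [IsProbabilityMeasure ν]
    (hne : μ ≠ ν) (hν : ShiftInvariant ν) (hμ : ShiftInvariant μ)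
    (herg : ∀ B : Set (ℤ → A), MeasurableSet B → shift ⁻¹' B = B →
      μ B = 0 ∨ μ B = 1) :
    ∃ cs : ℕ → (ℤ → A) → (ℤ → A), (∀ i, IsCA (cs i)) ∧
      Tendsto (fun i => deltaMu μ (cs i) id) atTop (nhds 0) ∧
      ¬ Tendsto (fun i => deltaMu ν (cs i) id) atTop (nhds 0) := by
  classical
  open symmDiff in
  obtain ⟨τ, hτ⟩ := exists_fpf hA
  obtain ⟨B, hBm, hB0, hBpos⟩ := exists_null_pos μ ν hne hν hμ herg
  set ρ : Measure (ℤ → A) := μ + ν with hρ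
  have h𝒜 : MeasureTheory.IsSetAlgebra (MeasureTheory.measurableCylinders fun _ : ℤ => A) :=
    ⟨MeasureTheory.empty_mem_measurableCylinders _,
     fun s hs => MeasureTheory.compl_mem_measurableCylinders hs,
     fun s t hs ht => MeasureTheory.union_mem_measurableCylinders hs ht⟩
  have hdense : ρ.MeasureDense (MeasureTheory.measurableCylinders fun _ : ℤ => A) :=
    Measure.MeasureDense.of_generateFrom_isSetAlgebra_finite ρ h𝒜
      MeasureTheory.generateFrom_measurableCylinders.symm
  have hεpos : ∀ n : ℕ, (0:ℝ) < min (1/((n:ℝ)+1)) ((ν B).toReal / 2) := by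
    intro n
    have h1 : (0:ℝ) < 1/((n:ℝ)+1) := by positivity
    have h2 : 0 < (ν B).toReal := ENNReal.toReal_pos hBpos.ne' (measure_ne_top ν B)
    exact lt_min h1 (by linarith)
  choose t htmem htlt using fun n : ℕ =>
    hdense.approx B hBm (measure_ne_top ρ B) _ (hεpos n)
  choose c hcCA hcset using fun n => ca_of_cylinder τ hτ (t n) (htmem n)
  have hset : ∀ n, {x : ℤ → A | c n x 0 ≠ id x 0} = t n := by
    intro n; simpa only [id_eq] using hcset n
  have hμt : ∀ n, μ (t n) ≤ ENNReal.ofReal (1/((n:ℝ)+1)) := by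
    intro n
    have hsub : t n ⊆ B ∪ (B ∆ t n) := by
      intro x hx
      by_cases hxB : x ∈ B
      · exact Or.inl hxB
      · exact Or.inr (Set.mem_symmDiff.2 (Or.inr ⟨hx, hxB⟩))
    calc μ (t n) ≤ μ B + μ (B ∆ t n) := le_trans (measure_mono hsub) (measure_union_le _ _)
      _ = μ (B ∆ t n) := by rw [hB0, zero_add]
      _ ≤ ρ (B ∆ t n) := by rw [hρ, Measure.add_apply]; exact le_self_add
      _ ≤ ENNReal.ofReal (1/((n:ℝ)+1)) :=
          le_trans (htlt n).le (ENNReal.ofReal_le_ofReal (min_le_left _ _))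
  have hbound : ∀ n : ℕ, deltaMu μ (c n) id ≤ 1/((n:ℝ)+1) := by
    intro n
    simp only [deltaMu, hset n]
    exact ENNReal.toReal_le_of_le_ofReal (by positivity) (hμt n)
  have hhalfne : ν B / 2 ≠ ⊤ :=
    ne_top_of_le_ne_top (measure_ne_top ν B) ENNReal.half_le_self
  have hνhalf : ∀ n, ν B / 2 ≤ ν (t n) := by
    intro n
    have hΔ : ν (B ∆ t n) ≤ ν B / 2 := by
      have h2 : ENNReal.ofReal ((ν B).toReal / 2) = ν B / 2 := by
        rw [ENNReal.ofReal_div_of_pos (by norm_num), ENNReal.ofReal_toReal (measure_ne_top ν B)]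
        norm_num
      calc ν (B ∆ t n) ≤ ρ (B ∆ t n) := by rw [hρ, Measure.add_apply]; exact le_add_self
        _ ≤ ENNReal.ofReal (min (1/((n:ℝ)+1)) ((ν B).toReal / 2)) := (htlt n).le
        _ ≤ ENNReal.ofReal ((ν B).toReal / 2) := ENNReal.ofReal_le_ofReal (min_le_right _ _)
        _ = ν B / 2 := h2
    have hsub : B ⊆ t n ∪ (B ∆ t n) := by
      intro x hx
      by_cases hxt : x ∈ t n
      · exact Or.inl hxt
      · exact Or.inr (Set.mem_symmDiff.2 (Or.inl ⟨hx, hxt⟩))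
    have hB' : ν B ≤ ν (t n) + ν B / 2 :=
      le_trans (le_trans (measure_mono hsub) (measure_union_le _ _)) (add_le_add_right hΔ _)
    have h2 : ν B / 2 + ν B / 2 ≤ ν (t n) + ν B / 2 := by rwa [ENNReal.add_halves]
    exact ENNReal.le_of_add_le_add_right hhalfne h2
  refine ⟨c, hcCA, squeeze_zero (fun n => ENNReal.toReal_nonneg) hbound
    tendsto_one_div_add_atTop_nhds_zero_nat, ?_⟩
  intro hT
  have hlow : ∀ n, (ν B / 2).toReal ≤ deltaMu ν (c n) id := by
    intro n
    simp only [deltaMu, hset n]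
    exact (ENNReal.toReal_le_toReal hhalfne (measure_ne_top ν (t n))).2 (hνhalf n)
  have hhalfpos : 0 < (ν B / 2).toReal := by
    refine ENNReal.toReal_pos ?_ hhalfne
    simp [ENNReal.div_eq_zero_iff, hBpos.ne']
  obtain ⟨N, hN⟩ := (Metric.tendsto_atTop.1 hT) ((ν B / 2).toReal) hhalfpos
  have hd := hN N le_rfl
  rw [Real.dist_eq, sub_zero, abs_of_nonneg (le_trans hhalfpos.le (hlow N))] at hd
  exact absurd hd (not_lt.2 (hlow N))
end
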